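/- arXiv:2409.17842 — 6 statements merged into one kernel-verified Lean document; each statement's English description precedes it below -/
import Mathlib

section
/- Let λ be a Young diagram with n = ℓ(λ), let t_1, t_2, … be indeterminates with t_0 := 0, and define z_{−n+i} := t_{i+1} − t_i for i ≥ 0 (so z_c is defined for all integers c ≥ −n). Then: (a) for every box (i,j) ∈ λ, z(H(i,j)) = t_{λ_i+n−i+1} − t_{j+n−λ'_j}, where H(i,j) is the hook of (i,j) in λ and z(S) := Σ_{(a,b) ∈ S} z_{b−a}; and (b) for every partition ν with ν ⊆ λ and ℓ(ν) ≤ n, z(λ/ν) = Σ_{i=1}^{n} ( t_{λ_i+n−i+1} − t_{ν_i+n−i+1} ). Consequently the multivariate hook-length formula in the z-variables and the one in the t-variables are equivalent. -/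
open scoped Classical

noncomputable section

/-- The hook of the cell `u` in `lam`: the cells of `lam` in the same row weakly to the right
of `u`, together with the cells in the same column strictly below `u`. -/
def hookCells (lam : YoungDiagram) (u : ℕ × ℕ) : Finset (ℕ × ℕ) :=
  lam.cells.filter (fun v => (v.1 = u.1 ∧ u.2 ≤ v.2) ∨ (v.2 = u.2 ∧ u.1 < v.1))

/-- The field of rational functions over `ℚ` in the indeterminates `t 1, t 2, …`. -/
abbrev K2 : Type := FractionRing (MvPolynomial ℕ ℚ)

/-- The indeterminates `t i` for `i ≥ 1`, with the convention `t 0 = 0`. -/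
def t : ℕ → K2 := fun i =>
  if i = 0 then 0 else algebraMap (MvPolynomial ℕ ℚ) K2 (MvPolynomial.X i)

/-- `z_{-n+i} := t_{i+1} - t_i` for `i ≥ 0`; that is, `z c = t (c+n+1) - t (c+n)`
for all integers `c ≥ -n`. -/
def zOfT (n : ℕ) : ℤ → K2 := fun c => t (c + n + 1).toNat - t (c + n).toNat

/-- helper -/
def fT (n : ℕ) : ℤ → K2 := fun c => t (c + n).toNat

lemma zOfT_eq (n : ℕ) (c : ℤ) : zOfT n c = fT n (c + 1) - fT n c := by
  simp only [zOfT, fT]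
  ring_nf

lemma sum_row (n i a b : ℕ) (hab : a ≤ b) :
    ∑ j ∈ Finset.Ico a b, zOfT n ((j : ℤ) - i)
      = fT n ((b : ℤ) - i) - fT n ((a : ℤ) - i) := by
  rw [Finset.sum_Ico_eq_sum_range]
  set F : ℕ → K2 := fun k => fT n ((a : ℤ) + k - i) with hF
  have : ∀ k, zOfT n ((↑(a + k) : ℤ) - i) = F (k + 1) - F k := by
    intro k
    rw [zOfT_eq, hF]
    congr 2 <;> push_cast <;> ring
  rw [Finset.sum_congr rfl (fun k _ => this k), Finset.sum_range_sub]
  rw [hF]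
  congr 2 <;> push_cast [hab] <;> ring

lemma sum_col (n j a b : ℕ) (hab : a ≤ b) :
    ∑ i ∈ Finset.Ico a b, zOfT n ((j : ℤ) - i)
      = fT n ((j : ℤ) - a + 1) - fT n ((j : ℤ) - b + 1) := by
  rw [Finset.sum_Ico_eq_sum_range]
  set F : ℕ → K2 := fun k => fT n ((j : ℤ) - a - k + 1) with hF
  have : ∀ k, zOfT n ((j : ℤ) - ↑(a + k)) = F k - F (k + 1) := by
    intro k
    rw [zOfT_eq, hF]
    congr 2 <;> push_cast <;> ring
  rw [Finset.sum_congr rfl (fun k _ => this k), Finset.sum_range_sub']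
  rw [hF]
  congr 2 <;> push_cast [hab] <;> ring

/-- Equivalence of the two forms of the multivariate hook-length formula. With
`n = ℓ(lam)`, `t_0 = 0` and `z_{-n+i} = t_{i+1} - t_i`:
(a) for every box `(i,j) ∈ lam` one has `z(H(i,j)) = t_{lam_i+n-i+1} - t_{j+n-lam'_j}`
    (telescoping along the hook), and
(b) for every partition `ν ⊆ lam` with `ℓ(ν) ≤ n`,
    `z(lam/ν) = Σ_{i=1}^n (t_{lam_i+n-i+1} - t_{ν_i+n-i+1})`,
where `z(S) = Σ_{(a,b) ∈ S} z_{b-a}`. (Cells are 0-indexed.) -/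
theorem z_t_equivalence (lam : YoungDiagram) (n : ℕ) (hn : n = lam.colLen 0) :
    (∀ u ∈ lam.cells,
      (∑ v ∈ hookCells lam u, zOfT n ((v.2 : ℤ) - v.1))
        = t (lam.rowLen u.1 + n - u.1) - t (u.2 + 1 + n - lam.colLen u.2)) ∧
    (∀ ν : YoungDiagram, ν ≤ lam → ν.colLen 0 ≤ n →
      (∑ u ∈ lam.cells \ ν.cells, zOfT n ((u.2 : ℤ) - u.1))
        = ∑ i ∈ Finset.range n,
            (t (lam.rowLen i + n - i) - t (ν.rowLen i + n - i))) := by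
  constructor
  · rintro ⟨i, j⟩ hu
    rw [YoungDiagram.mem_cells] at hu
    have hji : j < lam.rowLen i := (lam.mem_iff_lt_rowLen).mp hu
    have hij : i < lam.colLen j := (lam.mem_iff_lt_colLen).mp hu
    have hcn : lam.colLen j ≤ n := hn ▸ lam.colLen_anti 0 j (Nat.zero_le j)
    have hin : i < n := lt_of_lt_of_le hij hcn
    have hsplit : hookCells lam (i, j)
        = (Finset.Ico j (lam.rowLen i)).map ⟨fun j' => (i, j'), Prod.mk_right_injective i⟩
          ∪ (Finset.Ico (i + 1) (lam.colLen j)).map ⟨fun i' => (i', j), Prod.mk_left_injective j⟩ := by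
      ext ⟨a, b⟩
      simp only [hookCells, Finset.mem_filter, YoungDiagram.mem_cells, Finset.mem_union,
        Finset.mem_map, Finset.mem_Ico, Function.Embedding.coeFn_mk, Prod.mk.injEq]
      constructor
      · rintro ⟨hm, (⟨rfl, hjb⟩ | ⟨rfl, hia⟩)⟩
        · exact Or.inl ⟨b, ⟨hjb, (lam.mem_iff_lt_rowLen).mp hm⟩, rfl, rfl⟩
        · exact Or.inr ⟨a, ⟨hia, (lam.mem_iff_lt_colLen).mp hm⟩, rfl, rfl⟩
      · rintro (⟨j', ⟨h1, h2⟩, rfl, rfl⟩ | ⟨i', ⟨h1, h2⟩, rfl, rfl⟩)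
        · exact ⟨(lam.mem_iff_lt_rowLen).mpr h2, Or.inl ⟨rfl, h1⟩⟩
        · exact ⟨(lam.mem_iff_lt_colLen).mpr h2, Or.inr ⟨rfl, h1⟩⟩
    have hdisj : Disjoint
        ((Finset.Ico j (lam.rowLen i)).map ⟨fun j' => (i, j'), Prod.mk_right_injective i⟩)
        ((Finset.Ico (i + 1) (lam.colLen j)).map ⟨fun i' => (i', j), Prod.mk_left_injective j⟩) := by
      rw [Finset.disjoint_left]
      rintro ⟨a, b⟩ h1 h2
      simp only [Finset.mem_map, Finset.mem_Ico, Function.Embedding.coeFn_mk,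
        Prod.mk.injEq] at h1 h2
      obtain ⟨j', hj', rfl, rfl⟩ := h1
      obtain ⟨i', hi', rfl, -⟩ := h2
      omega
    rw [hsplit, Finset.sum_union hdisj, Finset.sum_map, Finset.sum_map]
    simp only [Function.Embedding.coeFn_mk]
    rw [sum_row n i j (lam.rowLen i) hji.le, sum_col n j (i + 1) (lam.colLen j) hij]
    have e1 : ((j : ℤ) - ↑(i + 1) + 1) = (j : ℤ) - i := by push_cast; ring
    rw [e1]
    have e2 : fT n ((lam.rowLen i : ℤ) - i) = t (lam.rowLen i + n - i) := by
      simp only [fT]; congr 1; omega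
    have e3 : fT n ((j : ℤ) - lam.colLen j + 1) = t (j + 1 + n - lam.colLen j) := by
      simp only [fT]; congr 1; omega
    rw [e2, e3]; ring
  · intro ν hν hν0
    have hrow : ∀ i, ν.rowLen i ≤ lam.rowLen i := by
      intro i
      by_cases h : ν.rowLen i = 0
      · omega
      · have : (i, ν.rowLen i - 1) ∈ ν := (ν.mem_iff_lt_rowLen).mpr (by omega)
        have : (i, ν.rowLen i - 1) ∈ lam := hν this
        have := (lam.mem_iff_lt_rowLen).mp this
        omega
    have hrn : ∀ a b, (a, b) ∈ lam → a < n := by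
      intro a b hm
      have : (a, 0) ∈ lam := lam.up_left_mem le_rfl (Nat.zero_le b) hm
      have := (lam.mem_iff_lt_colLen).mp this
      omega
    have hsplit : lam.cells \ ν.cells
        = (Finset.range n).biUnion (fun i =>
            (Finset.Ico (ν.rowLen i) (lam.rowLen i)).map ⟨fun j => (i, j), Prod.mk_right_injective i⟩) := by
      ext ⟨a, b⟩
      simp only [Finset.mem_sdiff, YoungDiagram.mem_cells, Finset.mem_biUnion, Finset.mem_range,
        Finset.mem_map, Finset.mem_Ico, Function.Embedding.coeFn_mk, Prod.mk.injEq]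
      constructor
      · rintro ⟨hm, hnm⟩
        refine ⟨a, hrn a b hm, b, ⟨?_, (lam.mem_iff_lt_rowLen).mp hm⟩, rfl, rfl⟩
        by_contra h
        exact hnm ((ν.mem_iff_lt_rowLen).mpr (by omega))
      · rintro ⟨i, hi, j, ⟨h1, h2⟩, rfl, rfl⟩
        exact ⟨(lam.mem_iff_lt_rowLen).mpr h2, fun hm => by
          have := (ν.mem_iff_lt_rowLen).mp hm; omega⟩
    rw [hsplit, Finset.sum_biUnion ?_]
    · refine Finset.sum_congr rfl fun i hi => ?_
      rw [Finset.mem_range] at hi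
      rw [Finset.sum_map]
      simp only [Function.Embedding.coeFn_mk]
      rw [sum_row n i (ν.rowLen i) (lam.rowLen i) (hrow i)]
      congr 1 <;> · simp only [fT]; congr 1; omega
    · intro x hx y hy hxy
      simp only [Function.onFun]
      rw [Finset.disjoint_left]
      rintro ⟨a, b⟩ h1 h2
      simp only [Finset.mem_map, Finset.mem_Ico, Function.Embedding.coeFn_mk,
        Prod.mk.injEq] at h1 h2
      obtain ⟨j', -, rfl, rfl⟩ := h1
      obtain ⟨j'', -, h, -⟩ := h2
      exact hxy h.symm
end
end

section
/- Let K be a field, let Z_μ(λ) ∈ K be defined for every pair of partitions μ, λ, let p_μ(λ) ∈ K be defined for all μ ⊆ λ, and let C_{ν/μ} ∈ K be defined for every pair μ ⊂ ν with |ν| = |μ| + 1. Assume: (vanishing) Z_μ(λ) = 0 whenever μ ⊄ λ; (Pieri rule) p_μ(λ) · Z_μ(λ) = Σ_{ν = μ+□, ν ⊆ λ} C_{ν/μ} · Z_ν(λ) for all μ ⊆ λ with μ ≠ λ, where the sum is over partitions ν ⊆ λ obtained from μ by adding one box; and p_μ(λ) ≠ 0 for all μ ⊆ λ with μ ≠ λ.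 Then for every pair μ ⊆ λ, Z_λ(λ) · Σ_{T ∈ SYT(λ/μ)} Π_{k=1}^{|λ/μ|} C_{T[=k]} / p_{T^{-1}[<k]}(λ) = Z_μ(λ), where for T ∈ SYT(λ/μ), T^{-1}[<k] is the partition whose complement in λ is occupied by entries ≥ k (with T^{-1}[<1] = μ), and T[=k] denotes the one-box skew shape T^{-1}[<k+1] / T^{-1}[<k]. -/
open scoped Classical

noncomputable section

/-- The cells of the skew shape `lam / μ`. -/
def skewCells (μ lam : YoungDiagram) : Finset (ℕ × ℕ) := lam.cells \ μ.cells

/-- A standard Young tableau of skew shape `lam / μ`: a bijection from the cells of the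
skew shape onto `{1, …, |lam/μ|}`, weakly increasing along rows and columns
(hence strictly increasing, being injective), extended by `0` outside the skew shape. -/
structure SkewSYT (μ lam : YoungDiagram) where
  toFun : ℕ × ℕ → ℕ
  zero_outside : ∀ u, u ∉ skewCells μ lam → toFun u = 0
  bijOn : Set.BijOn toFun (skewCells μ lam : Set (ℕ × ℕ)) (Set.Icc 1 (skewCells μ lam).card)
  mono : ∀ u v : ℕ × ℕ, u ∈ skewCells μ lam → v ∈ skewCells μ lam →
    u.1 ≤ v.1 → u.2 ≤ v.2 → toFun u ≤ toFun v

/-- The cells of the partition `T⁻¹[< k]`: the cells of `μ` together with the cells of the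
skew shape carrying entries `< k` (so its complement in `lam` is occupied by entries `≥ k`). -/
def ltCells (μ lam : YoungDiagram) (T : SkewSYT μ lam) (k : ℕ) : Finset (ℕ × ℕ) :=
  μ.cells ∪ (skewCells μ lam).filter (fun u => T.toFun u < k)

/-- The number of cells of `S` in row `i` (for `S` the cell set of a partition `ν`,
this is the part `ν_{i+1}`, rows being 0-indexed). -/
def rowCt (S : Finset (ℕ × ℕ)) (i : ℕ) : ℕ := (S.filter (fun u => u.1 = i)).card

/-! ### Auxiliary material -/

namespace SkewAux

variable {μ lam ν : YoungDiagram}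

theorem SkewSYT.ext' {T1 T2 : SkewSYT μ lam} (h : T1.toFun = T2.toFun) : T1 = T2 := by
  cases T1; cases T2; simpa using h

theorem T_mem (T : SkewSYT μ lam) {u : ℕ × ℕ} (hu : u ∈ skewCells μ lam) :
    1 ≤ T.toFun u ∧ T.toFun u ≤ (skewCells μ lam).card := by
  have := T.bijOn.mapsTo (Finset.mem_coe.2 hu)
  simpa [Set.mem_Icc] using this

instance skewFinite (μ lam : YoungDiagram) : Finite (SkewSYT μ lam) := by
  have hinj : Function.Injective
      (fun (T : SkewSYT μ lam) (u : {x // x ∈ skewCells μ lam}) =>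
        (⟨T.toFun u, Nat.lt_succ_of_le (T_mem T u.2).2⟩ : Fin ((skewCells μ lam).card + 1))) := by
    intro T1 T2 h
    apply SkewSYT.ext'
    funext u
    by_cases hu : u ∈ skewCells μ lam
    · have := congrFun h ⟨u, hu⟩
      simpa [Fin.ext_iff] using this
    · rw [T1.zero_outside u hu, T2.zero_outside u hu]
  exact Finite.of_injective _ hinj

noncomputable instance (μ lam : YoungDiagram) : Fintype (SkewSYT μ lam) :=
  Fintype.ofFinite _

theorem mem_skew {u : ℕ × ℕ} : u ∈ skewCells μ lam ↔ u ∈ lam.cells ∧ u ∉ μ.cells :=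
  Finset.mem_sdiff

theorem skew_subset (hmn : μ ≤ ν) : skewCells ν lam ⊆ skewCells μ lam := by
  intro u hu
  rw [mem_skew] at hu ⊢
  exact ⟨hu.1, fun h => hu.2 (YoungDiagram.cells_subset_iff.2 hmn h)⟩

theorem ltCells_lower (T : SkewSYT μ lam) (k : ℕ) :
    IsLowerSet ((ltCells μ lam T k : Finset (ℕ × ℕ)) : Set (ℕ × ℕ)) := by
  intro a b hba ha
  simp only [Finset.mem_coe, ltCells, Finset.mem_union, Finset.mem_filter] at ha ⊢
  rcases ha with ha | ⟨ha, hTa⟩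
  · exact Or.inl (μ.isLowerSet hba ha)
  · have hbl : b ∈ lam.cells := lam.isLowerSet hba (mem_skew.1 ha).1
    by_cases hbm : b ∈ μ.cells
    · exact Or.inl hbm
    · have hbs : b ∈ skewCells μ lam := mem_skew.2 ⟨hbl, hbm⟩
      have := T.mono b a hbs ha hba.1 hba.2
      exact Or.inr ⟨hbs, lt_of_le_of_lt this hTa⟩

theorem ltCells_one (T : SkewSYT μ lam) : ltCells μ lam T 1 = μ.cells := by
  ext u
  simp only [ltCells, Finset.mem_union, Finset.mem_filter]
  constructor
  · rintro (h | ⟨h, hlt⟩)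
    · exact h
    · exact absurd hlt (by have := (T_mem T h).1; omega)
  · exact Or.inl

theorem first_cell (T : SkewSYT μ lam) (hne : (skewCells μ lam).Nonempty) :
    ∃ u₁ ∈ skewCells μ lam, T.toFun u₁ = 1 ∧
      (skewCells μ lam).filter (fun u => T.toFun u < 2) = {u₁} := by
  have hc : 1 ≤ (skewCells μ lam).card := Finset.card_pos.2 hne
  obtain ⟨u₁, hu₁, hT1⟩ := T.bijOn.surjOn (Set.mem_Icc.2 ⟨le_refl 1, hc⟩)
  rw [Finset.mem_coe] at hu₁
  refine ⟨u₁, hu₁, hT1, ?_⟩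
  ext v
  simp only [Finset.mem_filter, Finset.mem_singleton]
  constructor
  · rintro ⟨hv, hlt⟩
    have h1 := (T_mem T hv).1
    have : T.toFun v = T.toFun u₁ := by omega
    exact T.bijOn.injOn (Finset.mem_coe.2 hv) (Finset.mem_coe.2 hu₁) this
  · rintro rfl
    exact ⟨hu₁, by omega⟩

theorem skew_of_h2 (T : SkewSYT μ lam) (h2 : ltCells μ lam T 2 = ν.cells) :
    skewCells ν lam = (skewCells μ lam).filter (fun u => 2 ≤ T.toFun u) := by
  ext u
  simp only [skewCells, ← h2, ltCells, Finset.mem_sdiff, Finset.mem_filter,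
    Finset.mem_union, not_or, not_and, Nat.not_lt]
  constructor
  · rintro ⟨hl, hm, hf⟩
    exact ⟨⟨hl, hm⟩, hf ⟨hl, hm⟩⟩
  · rintro ⟨⟨hl, hm⟩, hT⟩
    exact ⟨hl, hm, fun _ => hT⟩

theorem card_skew_of_h2 (T : SkewSYT μ lam) (hne : (skewCells μ lam).Nonempty)
    (h2 : ltCells μ lam T 2 = ν.cells) :
    (skewCells ν lam).card + 1 = (skewCells μ lam).card := by
  obtain ⟨u₁, hu₁, hT1, hfilt⟩ := first_cell T hne
  have := Finset.card_filter_add_card_filter_not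
    (s := skewCells μ lam) (p := fun u => 2 ≤ T.toFun u)
  rw [skew_of_h2 T h2]
  have hneg : (skewCells μ lam).filter (fun u => ¬ 2 ≤ T.toFun u) = {u₁} := by
    rw [← hfilt]; apply Finset.filter_congr; intro x _; simp
  rw [hneg] at this
  simpa using this

/-- Restriction of a skew SYT: remove the box containing `1` and shift entries down by one. -/
def restr (T : SkewSYT μ lam) (ν : YoungDiagram) (hne : (skewCells μ lam).Nonempty)
    (h2 : ltCells μ lam T 2 = ν.cells) : SkewSYT ν lam where
  toFun u := if u ∈ skewCells ν lam then T.toFun u - 1 else 0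
  zero_outside u hu := if_neg hu
  bijOn := by
    have hs := skew_of_h2 T h2
    have hc := card_skew_of_h2 T hne h2
    refine ⟨?_, ?_, ?_⟩
    · intro u hu
      rw [Finset.mem_coe] at hu
      have hu' : u ∈ skewCells μ lam := by rw [hs] at hu; exact (Finset.mem_filter.1 hu).1
      have h2' : 2 ≤ T.toFun u := by rw [hs] at hu; exact (Finset.mem_filter.1 hu).2
      have := (T_mem T hu').2
      simp only [if_pos hu, Set.mem_Icc]
      omega
    · intro u hu v hv huv
      rw [Finset.mem_coe] at hu hv
      obtain ⟨hu1, hu2⟩ : u ∈ skewCells μ lam ∧ 2 ≤ T.toFun u := by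
        rw [hs] at hu; exact Finset.mem_filter.1 hu
      obtain ⟨hv1, hv2⟩ : v ∈ skewCells μ lam ∧ 2 ≤ T.toFun v := by
        rw [hs] at hv; exact Finset.mem_filter.1 hv
      simp only [if_pos hu, if_pos hv] at huv
      have : T.toFun u = T.toFun v := by omega
      exact T.bijOn.injOn (Finset.mem_coe.2 hu1) (Finset.mem_coe.2 hv1) this
    · intro m hm
      rw [Set.mem_Icc] at hm
      have : m + 1 ∈ Set.Icc 1 (skewCells μ lam).card := Set.mem_Icc.2 (by omega)
      obtain ⟨u, hu, hTu⟩ := T.bijOn.surjOn this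
      rw [Finset.mem_coe] at hu
      have huν : u ∈ skewCells ν lam := by
        rw [hs, Finset.mem_filter]; exact ⟨hu, by omega⟩
      exact ⟨u, Finset.mem_coe.2 huν, by simp [if_pos huν]; omega⟩
  mono u v hu hv h1 h2' := by
    have hs := skew_of_h2 T h2
    have hu' : u ∈ skewCells μ lam := by rw [hs] at hu; exact (Finset.mem_filter.1 hu).1
    have hv' : v ∈ skewCells μ lam := by rw [hs] at hv; exact (Finset.mem_filter.1 hv).1
    have := T.mono u v hu' hv' h1 h2'
    simp only [if_pos hu, if_pos hv]
    omega

theorem restr_ltCells (T : SkewSYT μ lam) (hne : (skewCells μ lam).Nonempty)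
    (h2 : ltCells μ lam T 2 = ν.cells) (k : ℕ) (hk : 1 ≤ k) :
    ltCells ν lam (restr T ν hne h2) k = ltCells μ lam T (k + 1) := by
  have hs := skew_of_h2 T h2
  have happ : ∀ u, u ∈ skewCells ν lam → (restr T ν hne h2).toFun u = T.toFun u - 1 :=
    fun u hu => if_pos hu
  ext u
  simp only [ltCells, Finset.mem_union, Finset.mem_filter]
  constructor
  · rintro (hν | ⟨hν, hlt⟩)
    · rw [← h2] at hν
      rcases Finset.mem_union.1 hν with h | h
      · exact Or.inl h
      · obtain ⟨hu, hT⟩ := Finset.mem_filter.1 h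
        exact Or.inr ⟨hu, by omega⟩
    · obtain ⟨hu1, hu2⟩ : u ∈ skewCells μ lam ∧ 2 ≤ T.toFun u := by
        rw [hs] at hν; exact Finset.mem_filter.1 hν
      rw [happ u hν] at hlt
      exact Or.inr ⟨hu1, by omega⟩
  · rintro (hμ | ⟨hu, hlt⟩)
    · exact Or.inl (by rw [← h2]; exact Finset.mem_union_left _ hμ)
    · by_cases hT2 : T.toFun u < 2
      · refine Or.inl ?_
        rw [← h2]
        exact Finset.mem_union_right _ (Finset.mem_filter.2 ⟨hu, hT2⟩)
      · have hν : u ∈ skewCells ν lam := by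
          rw [hs]; exact Finset.mem_filter.2 ⟨hu, by omega⟩
        refine Or.inr ⟨hν, ?_⟩
        rw [happ u hν]
        omega

/-- Extension of a skew SYT: add a box with entry `1` and shift entries up by one. -/
def extend (hmn : μ ≤ ν) (hnl : ν ≤ lam) (hck : ν.cells.card = μ.cells.card + 1)
    (T' : SkewSYT ν lam) : SkewSYT μ lam where
  toFun u := if u ∈ skewCells ν lam then T'.toFun u + 1
    else if u ∈ skewCells μ lam then 1 else 0
  zero_outside u hu := by
    have : u ∉ skewCells ν lam := fun h => hu (skew_subset hmn h)
    simp [this, hu]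
  bijOn := by
    have hsub : skewCells ν lam ⊆ skewCells μ lam := skew_subset hmn
    have hbox : ∃ c, ν.cells \ μ.cells = {c} := by
      apply Finset.card_eq_one.1
      rw [Finset.card_sdiff_of_subset (YoungDiagram.cells_subset_iff.2 hmn)]
      omega
    obtain ⟨c, hc⟩ := hbox
    have hcν : c ∈ ν.cells ∧ c ∉ μ.cells := by
      have : c ∈ ν.cells \ μ.cells := hc ▸ Finset.mem_singleton_self c
      exact Finset.mem_sdiff.1 this
    have hcskew : c ∈ skewCells μ lam :=
      mem_skew.2 ⟨YoungDiagram.cells_subset_iff.2 hnl hcν.1, hcν.2⟩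
    have hcnot : c ∉ skewCells ν lam := fun h => (mem_skew.1 h).2 hcν.1
    have hnew : ∀ u, u ∈ skewCells μ lam → u ∉ skewCells ν lam → u = c := by
      intro u hu hnu
      have : u ∈ ν.cells \ μ.cells := by
        rw [Finset.mem_sdiff]
        refine ⟨?_, (mem_skew.1 hu).2⟩
        by_contra hun
        exact hnu (mem_skew.2 ⟨(mem_skew.1 hu).1, hun⟩)
      rw [hc, Finset.mem_singleton] at this
      exact this
    have hcard : (skewCells μ lam).card = (skewCells ν lam).card + 1 := by
      have h1 := Finset.card_sdiff_add_card_eq_card hsub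
      have h2 : skewCells μ lam \ skewCells ν lam = {c} := by
        rw [← hc]
        ext u
        simp only [Finset.mem_sdiff, skewCells]
        constructor
        · rintro ⟨⟨hl, hm⟩, hn⟩
          refine ⟨?_, hm⟩
          by_contra hun
          exact hn ⟨hl, hun⟩
        · rintro ⟨hn, hm⟩
          exact ⟨⟨YoungDiagram.cells_subset_iff.2 hnl hn, hm⟩, fun h => h.2 hn⟩
      rw [h2, Finset.card_singleton] at h1
      omega
    refine ⟨?_, ?_, ?_⟩
    · intro u hu
      rw [Finset.mem_coe] at hu
      by_cases hν : u ∈ skewCells ν lam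
      · have := (T_mem T' hν).2
        simp only [if_pos hν, Set.mem_Icc]
        omega
      · simp only [if_neg hν, if_pos hu, Set.mem_Icc]
        omega
    · intro u hu v hv huv
      rw [Finset.mem_coe] at hu hv
      by_cases hνu : u ∈ skewCells ν lam <;> by_cases hνv : v ∈ skewCells ν lam
      · simp only [if_pos hνu, if_pos hνv] at huv
        exact T'.bijOn.injOn (Finset.mem_coe.2 hνu) (Finset.mem_coe.2 hνv)
          (by omega)
      · exfalso
        have h1 := (T_mem T' hνu).1
        simp only [if_pos hνu, if_neg hνv, if_pos hv] at huv
        omega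
      · exfalso
        have h1 := (T_mem T' hνv).1
        simp only [if_neg hνu, if_pos hu, if_pos hνv] at huv
        omega
      · rw [hnew u hu hνu, hnew v hv hνv]
    · intro m hm
      rw [Set.mem_Icc, hcard] at hm
      rcases Nat.lt_or_ge m 2 with hm2 | hm2
      · have : m = 1 := by omega
        subst this
        exact ⟨c, Finset.mem_coe.2 hcskew, by simp [hcnot, hcskew]⟩
      · have : m - 1 ∈ Set.Icc 1 (skewCells ν lam).card := Set.mem_Icc.2 (by omega)
        obtain ⟨u, hu, hTu⟩ := T'.bijOn.surjOn this
        rw [Finset.mem_coe] at hu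
        exact ⟨u, Finset.mem_coe.2 (hsub hu), by simp [hu]; omega⟩
  mono u v hu hv h1 h2 := by
    have hsub : skewCells ν lam ⊆ skewCells μ lam := skew_subset hmn
    by_cases hνu : u ∈ skewCells ν lam <;> by_cases hνv : v ∈ skewCells ν lam
    · simp only [if_pos hνu, if_pos hνv]
      have := T'.mono u v hνu hνv h1 h2
      omega
    · exfalso
      -- v is the added box of ν, u ∉ ν, u ≤ v: contradiction with ν lower set
      have hvν : v ∈ ν.cells := by
        by_contra hvn
        exact hνv (mem_skew.2 ⟨(mem_skew.1 hv).1, hvn⟩)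
      have huν : u ∈ ν.cells := ν.isLowerSet (Prod.le_def.2 ⟨h1, h2⟩) hvν
      exact (mem_skew.1 hνu).2 huν
    · simp only [if_neg hνu, if_pos hu, if_pos hνv]
      have := (T_mem T' hνv).1
      omega
    · simp only [if_neg hνu, if_pos hu, if_neg hνv, if_pos hv]
      exact le_refl 1

theorem extend_ltCells2 (hmn : μ ≤ ν) (hnl : ν ≤ lam) (hck : ν.cells.card = μ.cells.card + 1)
    (T' : SkewSYT ν lam) : ltCells μ lam (extend hmn hnl hck T') 2 = ν.cells := by
  ext u
  simp only [ltCells, Finset.mem_union, Finset.mem_filter]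
  simp only [extend]
  constructor
  · rintro (h | ⟨h, hlt⟩)
    · exact YoungDiagram.cells_subset_iff.2 hmn h
    · by_cases hν : u ∈ skewCells ν lam
      · exfalso
        have := (T_mem T' hν).1
        rw [if_pos hν] at hlt
        omega
      · by_contra hun
        exact hν (mem_skew.2 ⟨(mem_skew.1 h).1, hun⟩)
  · intro hν
    by_cases hm : u ∈ μ.cells
    · exact Or.inl hm
    · have hus : u ∈ skewCells μ lam :=
        mem_skew.2 ⟨YoungDiagram.cells_subset_iff.2 hnl hν, hm⟩
      have hnν : u ∉ skewCells ν lam := fun h => (mem_skew.1 h).2 hν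
      exact Or.inr ⟨hus, by simp [hnν, hus]⟩

theorem restr_extend (hmn : μ ≤ ν) (hnl : ν ≤ lam) (hck : ν.cells.card = μ.cells.card + 1)
    (T' : SkewSYT ν lam) (hne : (skewCells μ lam).Nonempty)
    (h2 : ltCells μ lam (extend hmn hnl hck T') 2 = ν.cells) :
    restr (extend hmn hnl hck T') ν hne h2 = T' := by
  apply SkewSYT.ext'
  funext u
  by_cases hν : u ∈ skewCells ν lam
  · simp [restr, extend, hν]
  · simp [restr, hν, T'.zero_outside u hν]

theorem extend_restr (T : SkewSYT μ lam) (hne : (skewCells μ lam).Nonempty)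
    (h2 : ltCells μ lam T 2 = ν.cells) (hmn : μ ≤ ν) (hnl : ν ≤ lam)
    (hck : ν.cells.card = μ.cells.card + 1) :
    extend hmn hnl hck (restr T ν hne h2) = T := by
  have hs := skew_of_h2 T h2
  apply SkewSYT.ext'
  funext u
  by_cases hν : u ∈ skewCells ν lam
  · have h2u : 2 ≤ T.toFun u := by rw [hs] at hν; exact (Finset.mem_filter.1 hν).2
    simp only [extend, restr, if_pos hν]
    omega
  · by_cases hu : u ∈ skewCells μ lam
    · have : ¬ 2 ≤ T.toFun u := by
        intro h
        exact hν (by rw [hs, Finset.mem_filter]; exact ⟨hu, h⟩)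
      have h1 := (T_mem T hu).1
      simp only [extend, restr, if_neg hν, if_pos hu]
      omega
    · simp only [extend, restr, if_neg hν, if_neg hu]
      exact (T.zero_outside u hu).symm

/-- The ν-diagram of a skew SYT: μ plus the box containing 1. -/
def nuOf (T : SkewSYT μ lam) : YoungDiagram :=
  ⟨ltCells μ lam T 2, ltCells_lower T 2⟩

theorem nuOf_cells (T : SkewSYT μ lam) : (nuOf T).cells = ltCells μ lam T 2 := rfl

theorem prod_eq {K : Type} [Field K] (C : Finset (ℕ × ℕ) → Finset (ℕ × ℕ) → K)
    (p : Finset (ℕ × ℕ) → K) (T : SkewSYT μ lam) (hne : (skewCells μ lam).Nonempty)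
    (h2 : ltCells μ lam T 2 = ν.cells) {n : ℕ} (hcard : (skewCells μ lam).card = n + 1) :
    ∏ k ∈ Finset.Icc 1 (n + 1),
        C (ltCells μ lam T (k + 1)) (ltCells μ lam T k) / p (ltCells μ lam T k)
      = C ν.cells μ.cells / p μ.cells *
        ∏ k ∈ Finset.Icc 1 n,
          C (ltCells ν lam (restr T ν hne h2) (k + 1)) (ltCells ν lam (restr T ν hne h2) k) /
            p (ltCells ν lam (restr T ν hne h2) k) := by
  have hins : Finset.Icc 1 (n + 1) = insert 1 (Finset.Icc 2 (n + 1)) := by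
    ext x; simp only [Finset.mem_insert, Finset.mem_Icc]; omega
  have hmap : Finset.Icc 2 (n + 1) =
      (Finset.Icc 1 n).map ⟨fun x => x + 1, fun a b h => by simpa using h⟩ := by
    ext x
    simp only [Finset.mem_Icc, Finset.mem_map, Function.Embedding.coeFn_mk]
    constructor
    · intro h; exact ⟨x - 1, by omega, show x - 1 + 1 = x by omega⟩
    · rintro ⟨a, ha, rfl⟩; show 2 ≤ a + 1 ∧ a + 1 ≤ n + 1; omega
  rw [hins, Finset.prod_insert (by simp [Finset.mem_Icc]), hmap, Finset.prod_map]
  congr 1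
  · rw [show (1 : ℕ) + 1 = 2 from rfl, h2, ltCells_one]
  · apply Finset.prod_congr rfl
    intro k hk
    rw [Finset.mem_Icc] at hk
    rw [restr_ltCells T hne h2 (k + 1) (by omega), restr_ltCells T hne h2 k (by omega)]
    rfl

theorem pieri_set_finite (lam μ : YoungDiagram) :
    {ν : YoungDiagram | ν ≤ lam ∧ μ ≤ ν ∧ ν.cells.card = μ.cells.card + 1}.Finite := by
  have hinj : Function.Injective (YoungDiagram.cells) := fun a b h => YoungDiagram.ext h
  have hfin : (YoungDiagram.cells ⁻¹' ↑(lam.cells.powerset)).Finite :=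
    Set.Finite.preimage hinj.injOn (lam.cells.powerset.finite_toSet)
  apply hfin.subset
  intro ν hν
  simp only [Set.mem_preimage, Finset.coe_powerset, Set.mem_preimage,
    Finset.mem_coe, Finset.mem_powerset]
  exact Set.mem_setOf_eq ▸ YoungDiagram.cells_subset_iff.2 hν.1

end SkewAux

open SkewAux

/-- **General formalism for sums over skew SYTs.** -/
theorem general_skew_SYT_sum {K : Type} [Field K] (lam : YoungDiagram)
    (Z : Finset (ℕ × ℕ) → K) (p : Finset (ℕ × ℕ) → K)
    (C : Finset (ℕ × ℕ) → Finset (ℕ × ℕ) → K)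
    (hvanish : ∀ μ : YoungDiagram, ¬μ ≤ lam → Z μ.cells = 0)
    (hpieri : ∀ μ : YoungDiagram, μ ≤ lam → μ ≠ lam →
      p μ.cells * Z μ.cells
        = ∑ᶠ ν ∈ {ν : YoungDiagram |
            ν ≤ lam ∧ μ ≤ ν ∧ ν.cells.card = μ.cells.card + 1},
            C ν.cells μ.cells * Z ν.cells)
    (hp : ∀ μ : YoungDiagram, μ ≤ lam → μ ≠ lam → p μ.cells ≠ 0)
    (μ : YoungDiagram) (hml : μ ≤ lam) :
    Z lam.cells *
      ∑ᶠ T : SkewSYT μ lam, ∏ k ∈ Finset.Icc 1 (skewCells μ lam).card,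
        C (ltCells μ lam T (k + 1)) (ltCells μ lam T k) / p (ltCells μ lam T k)
    = Z μ.cells := by
  -- induction on the number of skew cells
  suffices h : ∀ n (μ : YoungDiagram), μ ≤ lam → (skewCells μ lam).card = n →
      Z lam.cells *
        ∑ᶠ T : SkewSYT μ lam, ∏ k ∈ Finset.Icc 1 (skewCells μ lam).card,
          C (ltCells μ lam T (k + 1)) (ltCells μ lam T k) / p (ltCells μ lam T k)
      = Z μ.cells by
    exact h _ μ hml rfl
  intro n
  induction n with
  | zero =>
    intro μ hml hcard
    have hskew : skewCells μ lam = ∅ := Finset.card_eq_zero.1 hcard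
    have hμl : μ = lam := by
      apply YoungDiagram.ext
      apply Finset.Subset.antisymm (YoungDiagram.cells_subset_iff.2 hml)
      intro u hu
      by_contra hum
      have : u ∈ skewCells μ lam := mem_skew.2 ⟨hu, hum⟩
      simp [hskew] at this
    subst hμl
    have hT0 : SkewSYT μ μ := by
      refine ⟨fun _ => 0, fun _ _ => rfl, ?_, fun _ _ h _ _ _ => by simp [hskew] at h⟩
      rw [hskew]
      simp only [Finset.coe_empty, Finset.card_empty]
      rw [Set.Icc_eq_empty (by omega)]
      exact ⟨fun x hx => absurd hx (Set.notMem_empty x), fun x hx => absurd hx (Set.notMem_empty x),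
        fun x hx => absurd hx (Set.notMem_empty x)⟩
    have huniq : ∀ T1 T2 : SkewSYT μ μ, T1 = T2 := fun T1 T2 =>
      SkewSYT.ext' (funext fun u =>
        by rw [T1.zero_outside u (by simp [hskew]), T2.zero_outside u (by simp [hskew])])
    haveI : Unique (SkewSYT μ μ) := ⟨⟨hT0⟩, fun T => huniq T hT0⟩
    rw [finsum_eq_sum_of_fintype]
    rw [hcard]
    simp
  | succ n IH =>
    intro μ hml hcard
    have hne : (skewCells μ lam).Nonempty := Finset.card_pos.1 (by omega)
    have hμlam : μ ≠ lam := by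
      rintro rfl
      obtain ⟨u, hu⟩ := hne
      simp [skewCells] at hu
    apply mul_left_cancel₀ (hp μ hml hμlam)
    rw [hpieri μ hml hμlam]
    -- convert the finsum over the Pieri set to a finite sum
    set S := {ν : YoungDiagram | ν ≤ lam ∧ μ ≤ ν ∧ ν.cells.card = μ.cells.card + 1} with hS
    have hSfin : S.Finite := pieri_set_finite lam μ
    rw [← hSfin.coe_toFinset, finsum_mem_coe_finset]
    -- convert the finsum over tableaux to a finite sum
    rw [finsum_eq_sum_of_fintype]
    -- fiber the sum over tableaux by nuOf
    have hmaps : ∀ T : SkewSYT μ lam, T ∈ Finset.univ → nuOf T ∈ hSfin.toFinset := by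
      intro T _
      rw [Set.Finite.mem_toFinset]
      obtain ⟨u₁, hu₁, hT1, hfilt⟩ := first_cell T hne
      refine ⟨?_, ?_, ?_⟩
      · -- nuOf T ≤ lam
        rw [← YoungDiagram.cells_subset_iff, nuOf_cells, ltCells]
        apply Finset.union_subset (YoungDiagram.cells_subset_iff.2 hml)
        intro u hu
        exact (mem_skew.1 (Finset.mem_filter.1 hu).1).1
      · rw [← YoungDiagram.cells_subset_iff, nuOf_cells, ltCells]
        exact Finset.subset_union_left
      · rw [nuOf_cells, ltCells, hfilt]
        rw [Finset.card_union_of_disjoint]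
        · simp
        · simp only [Finset.disjoint_singleton_right]
          exact (mem_skew.1 hu₁).2
    rw [← Finset.sum_fiberwise_of_maps_to hmaps]
    rw [Finset.mul_sum, Finset.mul_sum]
    apply Finset.sum_congr rfl
    intro ν hν
    rw [Set.Finite.mem_toFinset] at hν
    obtain ⟨hnl, hmn, hck⟩ := hν
    -- card of the smaller skew shape
    have hcards : (skewCells ν lam).card = n := by
      have h1 : (skewCells μ lam).card + μ.cells.card = lam.cells.card :=
        Finset.card_sdiff_add_card_eq_card (YoungDiagram.cells_subset_iff.2 hml)
      have h2 : (skewCells ν lam).card + ν.cells.card = lam.cells.card :=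
        Finset.card_sdiff_add_card_eq_card (YoungDiagram.cells_subset_iff.2 hnl)
      omega
    -- rewrite each summand in the fiber using restr
    have hinner :
        ∑ T ∈ Finset.univ.filter (fun T : SkewSYT μ lam => nuOf T = ν),
          ∏ k ∈ Finset.Icc 1 (skewCells μ lam).card,
            C (ltCells μ lam T (k + 1)) (ltCells μ lam T k) / p (ltCells μ lam T k)
        = ∑ T' : SkewSYT ν lam,
            C ν.cells μ.cells / p μ.cells *
            ∏ k ∈ Finset.Icc 1 (skewCells ν lam).card,
              C (ltCells ν lam T' (k + 1)) (ltCells ν lam T' k) / p (ltCells ν lam T' k) := by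
      refine Finset.sum_bij'
        (fun T hT => restr T ν hne (by
          have := (Finset.mem_filter.1 hT).2
          rw [← this, nuOf_cells]))
        (fun T' _ => extend hmn hnl hck T') ?_ ?_ ?_ ?_ ?_
      · intro a ha; exact Finset.mem_univ _
      · intro T' hT'
        rw [Finset.mem_filter]
        refine ⟨Finset.mem_univ _, ?_⟩
        apply YoungDiagram.ext
        rw [nuOf_cells, extend_ltCells2]
      · intro T hT
        exact extend_restr T hne _ hmn hnl hck
      · intro T' hT'
        exact restr_extend hmn hnl hck T' hne _
      · intro T hT
        rw [hcard, hcards]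
        exact prod_eq C p T hne _ hcard
    rw [hinner, ← Finset.mul_sum]
    -- apply the induction hypothesis for ν
    have hIH := IH ν hnl hcards
    rw [hcards, finsum_eq_sum_of_fintype] at hIH
    rw [hcards, ← hIH]
    -- now pure field algebra
    have hpμ : p μ.cells ≠ 0 := hp μ hml hμlam
    field_simp

end
end

section
/- Let n ≥ 1, let μ be a partition with ℓ(μ) ≤ n, let x_1, …, x_n be distinct elements of a field and a_1, a_2, … elements of the same field (or work with indeterminates in a rational function field). Then Σ_i s_{μ+ε_i}(x_1,…,x_n | a) = ( Σ_{i=1}^{n} x_i − Σ_{i=1}^{n} a_{μ_i+n−i+1} ) · s_μ(x_1,…,x_n | a), where ε_i is the i-th standard unit vector and the sum on the left is over those 1 ≤ i ≤ n for which μ + ε_i is again a partition. -/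
open scoped Classical

noncomputable section

/-- The Vandermonde product `Π_{1 ≤ i < j ≤ n} (x i - x j)` (variables indexed from 1). -/
def vdm {K : Type} [Field K] (n : ℕ) (x : ℕ → K) : K :=
  ∏ p ∈ (Finset.Icc 1 n ×ˢ Finset.Icc 1 n).filter (fun p => p.1 < p.2), (x p.1 - x p.2)

/-- The factorial Schur polynomial
`s_μ(x_1,…,x_n | a) = det[ (x_i - a_1)⋯(x_i - a_{μ_j+n-j}) ]_{i,j=1}^n / Π_{i<j}(x_i - x_j)`.
Here `μ : ℕ → ℕ` is the 0-indexed part sequence (`μ k` is the `(k+1)`-st part), and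
`x`, `a` are indexed from 1; for `i j : Fin n` the 1-indexed quantity `μ_j + n - j` reads
`μ j + (n - 1 - j)`. -/
def facSchur {K : Type} [Field K] (n : ℕ) (μ : ℕ → ℕ) (x a : ℕ → K) : K :=
  Matrix.det (Matrix.of fun i j : Fin n =>
      ∏ r ∈ Finset.Icc 1 (μ (j : ℕ) + (n - 1 - (j : ℕ))), (x ((i : ℕ) + 1) - a r))
    / vdm n x

lemma sum_det_updateColumn_mul {K : Type} [Field K] {n : ℕ}
    (N : Matrix (Fin n) (Fin n) K) (d : Fin n → K) :
    ∑ j : Fin n, (N.updateCol j (fun i => d i * N i j)).det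
      = (∑ i : Fin n, d i) * N.det := by
  have h1 : ∀ (σ : Equiv.Perm (Fin n)) (j : Fin n),
      (∏ i : Fin n, (N.updateCol j (fun i => d i * N i j)) (σ i) i)
        = d (σ j) * ∏ i : Fin n, N (σ i) i := by
    intro σ j
    have h2 : ∀ i : Fin n, (N.updateCol j (fun i => d i * N i j)) (σ i) i
        = (if i = j then d (σ i) else 1) * N (σ i) i := by
      intro i
      by_cases h : i = j
      · subst h; simp [Matrix.updateCol_self]
      · simp [Matrix.updateCol_ne h, h]
    rw [Finset.prod_congr rfl (fun i _ => h2 i), Finset.prod_mul_distrib,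
      Finset.prod_ite_eq' Finset.univ j (fun i => d (σ i))]
    simp
  simp only [Matrix.det_apply]
  rw [Finset.sum_comm, Finset.mul_sum]
  refine Finset.sum_congr rfl fun σ _ => ?_
  simp only [h1 σ]
  rw [← Finset.smul_sum, ← Finset.sum_mul, Equiv.sum_comp σ d, mul_smul_comm]

/-- **Pieri rule for factorial Schur polynomials.** For a partition `μ` with `ℓ(μ) ≤ n`,
pairwise distinct `x_1, …, x_n` in a field, and shifts `a`:
`Σ_i s_{μ+ε_i}(x | a) = (Σ_{i=1}^n x_i - Σ_{i=1}^n a_{μ_i+n-i+1}) · s_μ(x | a)`,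
the left sum being over those `1 ≤ i ≤ n` for which `μ + ε_i` is again a partition. -/
theorem facSchur_pieri {K : Type} [Field K] (n : ℕ) (hn : 1 ≤ n)
    (μ : YoungDiagram) (hl : μ.colLen 0 ≤ n) (x a : ℕ → K)
    (hx : ∀ i j : ℕ, 1 ≤ i → i ≤ n → 1 ≤ j → j ≤ n → i ≠ j → x i ≠ x j) :
    (∑ i ∈ (Finset.range n).filter
        (fun i => i = 0 ∨ μ.rowLen i < μ.rowLen (i - 1)),
        facSchur n (Function.update (fun k => μ.rowLen k) i (μ.rowLen i + 1)) x a)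
    = ((∑ i ∈ Finset.Icc 1 n, x i) - ∑ i ∈ Finset.range n, a (μ.rowLen i + n - i)) *
        facSchur n (fun k => μ.rowLen k) x a := by
  classical
  set μf : ℕ → ℕ := fun k => μ.rowLen k with hμf
  set c : ℕ → ℕ := fun j => μf j + (n - 1 - j) with hc
  set N : Matrix (Fin n) (Fin n) K :=
    Matrix.of (fun i j : Fin n => ∏ r ∈ Finset.Icc 1 (c (j : ℕ)), (x ((i : ℕ) + 1) - a r))
    with hN
  -- vandermonde nonzero
  have hv : vdm n x ≠ 0 := by
    rw [vdm, Finset.prod_ne_zero_iff]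
    rintro ⟨p, q⟩ hp
    simp only [Finset.mem_filter, Finset.mem_product, Finset.mem_Icc] at hp
    obtain ⟨⟨⟨hp1, hp2⟩, hq1, hq2⟩, hlt⟩ := hp
    exact fun h => hx p q hp1 hp2 hq1 hq2 (Nat.ne_of_lt hlt) (sub_eq_zero.mp h)
  -- each updated facSchur is a determinant formula
  have key : ∀ j : Fin n,
      facSchur n (Function.update μf (j : ℕ) (μf (j : ℕ) + 1)) x a
        = ((N.updateCol j (fun r => x ((r : ℕ) + 1) * N r j)).det
          - a (c (j : ℕ) + 1) * N.det) / vdm n x := by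
    intro j0
    rw [facSchur]
    congr 1
    have hmat : (Matrix.of fun r j : Fin n =>
        ∏ s ∈ Finset.Icc 1
            ((Function.update μf (j0 : ℕ) (μf (j0 : ℕ) + 1)) (j : ℕ) + (n - 1 - (j : ℕ))),
          (x ((r : ℕ) + 1) - a s))
        = N.updateCol j0
            (fun r => (x ((r : ℕ) + 1) - a (c (j0 : ℕ) + 1)) * N r j0) := by
      ext r j
      by_cases h : j = j0
      · subst h
        rw [Matrix.updateCol_self]
        simp only [Matrix.of_apply, Function.update_self]
        have he : μf (j : ℕ) + 1 + (n - 1 - (j : ℕ)) = c (j : ℕ) + 1 := by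
          have := j.isLt; simp only [hc]; omega
        rw [he, Finset.prod_Icc_succ_top (by omega)]
        simp only [hN, Matrix.of_apply]
        ring
      · rw [Matrix.updateCol_ne h]
        simp only [Matrix.of_apply, hN]
        rw [Function.update_of_ne (fun hj => h (Fin.ext hj))]
    rw [hmat]
    have hcol : (fun r : Fin n => (x ((r : ℕ) + 1) - a (c (j0 : ℕ) + 1)) * N r j0)
        = (fun r : Fin n => x ((r : ℕ) + 1) * N r j0)
          + (-(a (c (j0 : ℕ) + 1))) • (fun r : Fin n => N r j0) := by
      funext r; simp; ring
    rw [hcol, Matrix.det_updateCol_add, Matrix.det_updateCol_smul,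
      Matrix.updateCol_eq_self]
    ring
  -- extend the sum to all of range n
  have hext : (∑ i ∈ (Finset.range n).filter
        (fun i => i = 0 ∨ μ.rowLen i < μ.rowLen (i - 1)),
        facSchur n (Function.update (fun k => μ.rowLen k) i (μ.rowLen i + 1)) x a)
      = ∑ i ∈ Finset.range n,
        facSchur n (Function.update μf i (μf i + 1)) x a := by
    refine Finset.sum_subset (Finset.filter_subset _ _) ?_
    intro i hi hni
    simp only [Finset.mem_filter, Finset.mem_range, not_and, not_or, not_lt] at hni
    obtain ⟨hi0, hlei⟩ := hni (Finset.mem_range.mp hi)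
    have hi' : i < n := Finset.mem_range.mp hi
    have h1i : 1 ≤ i := Nat.one_le_iff_ne_zero.mpr hi0
    have heq : μf i = μf (i - 1) :=
      le_antisymm (μ.rowLen_anti _ _ (by omega)) hlei
    -- columns i-1 and i of the updated matrix coincide
    rw [facSchur, Matrix.det_zero_of_column_eq
      (i := (⟨i - 1, by omega⟩ : Fin n)) (j := (⟨i, hi'⟩ : Fin n))
      (Fin.ne_of_val_ne (show i - 1 ≠ i by omega)) ?_, zero_div]
    intro k
    simp only [Matrix.of_apply]
    congr 2
    rw [Function.update_of_ne (show i - 1 ≠ i by omega), Function.update_self]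
    simp only [hμf] at heq ⊢
    omega
  rw [hext, ← Fin.sum_univ_eq_sum_range
    (fun i => facSchur n (Function.update μf i (μf i + 1)) x a) n,
    Finset.sum_congr rfl (fun j _ => key j)]
  rw [← Finset.sum_div, Finset.sum_sub_distrib, ← Finset.sum_mul,
    sum_det_updateColumn_mul N (fun r => x ((r : ℕ) + 1))]
  have hxsum : (∑ i : Fin n, x ((i : ℕ) + 1)) = ∑ i ∈ Finset.Icc 1 n, x i := by
    rw [Fin.sum_univ_eq_sum_range (fun i => x (i + 1)) n]
    rw [← Finset.Ico_add_one_right_eq_Icc, Finset.sum_Ico_eq_sum_range]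
    simp [add_comm]
  have hasum : (∑ j : Fin n, a (c (j : ℕ) + 1))
      = ∑ i ∈ Finset.range n, a (μ.rowLen i + n - i) := by
    rw [Fin.sum_univ_eq_sum_range (fun i => a (c i + 1)) n]
    refine Finset.sum_congr rfl fun i hi => ?_
    have hi' : i < n := Finset.mem_range.mp hi
    congr 1
    simp only [hc, hμf]
    omega
  rw [hxsum, hasum, facSchur, ← hN]
  field_simp
end
end

section
/- Let μ be a partition with ℓ(μ) ≤ n, let m = (m_1, …, m_n) be a weakly increasing sequence of positive integers, and let x_1, x_2, … and b_1, b_2, … be indeterminates. Define P_{i,j} := Σ_{r=0}^{μ_i+j−i} (−1)^r e_r(b_1,…,b_{μ_i+m_i−i}) · h_{μ_i+j−i−r}(x_1,…,x_{m_i}) for 1 ≤ i,j ≤ n (with P_{i,j} = 0 when μ_i + j − i < 0). Then det[ P_{i,j} ]_{i,j=1}^{n} = Σ_{T ∈ SSYT(μ; m)} Π_{(i,j) ∈ μ} ( x_{T(i,j)} − b_{T(i,j)+j−i} ), the sum over all flagged semistandard Young tableaux of shape μ with flag m. -/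
open scoped Classical

noncomputable section

/-- The elementary symmetric polynomial `e_r(b_1, …, b_c)` (variables indexed from 1). -/
def epoly {R : Type} [CommRing R] (r c : ℕ) (b : ℕ → R) : R :=
  ∑ S ∈ (Finset.Icc 1 c).powersetCard r, ∏ i ∈ S, b i

/-- The complete homogeneous symmetric polynomial `h_k(x_1, …, x_m)`
(variables indexed from 1). -/
def hpoly {R : Type} [CommRing R] (k m : ℕ) (x : ℕ → R) : R :=
  ∑ α ∈ Finset.Nat.antidiagonalTuple m k, ∏ i : Fin m, x ((i : ℕ) + 1) ^ α i

/-- The matrix entry `P_{i,j}^{μ,m}(x | b) = Σ_{r=0}^{μ_i+j-i} (-1)^r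
e_r(b_1,…,b_{μ_i+m_i-i}) h_{μ_i+j-i-r}(x_1,…,x_{m_i})`, equal to `0` when `μ_i + j - i < 0`
(indices `i`, `j` 1-indexed in the mathematics, matrix indices `i j : Fin n` 0-indexed,
so `μ_i + j - i` reads `μ.rowLen i + j - i`). -/
def Pmat {R : Type} [CommRing R] (n : ℕ) (μ : YoungDiagram) (m : ℕ → ℕ)
    (x b : ℕ → R) (i j : Fin n) : R :=
  if μ.rowLen (i : ℕ) + (j : ℕ) < (i : ℕ) then 0
  else
    ∑ r ∈ Finset.range (μ.rowLen (i : ℕ) + (j : ℕ) - (i : ℕ) + 1),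
      (-1) ^ r * epoly r (μ.rowLen (i : ℕ) + m (i : ℕ) - ((i : ℕ) + 1)) b *
        hpoly (μ.rowLen (i : ℕ) + (j : ℕ) - (i : ℕ) - r) (m (i : ℕ)) x

/-- The polynomial ring `ℚ[x_0, x_1, …; b_0, b_1, …]`. -/
abbrev R6 : Type := MvPolynomial (ℕ ⊕ ℕ) ℚ

/-- The indeterminates `x i`. -/
def xv : ℕ → R6 := fun i => MvPolynomial.X (Sum.inl i)

/-- The indeterminates `b c`. -/
def bv : ℕ → R6 := fun c => MvPolynomial.X (Sum.inr c)

namespace FJT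

variable {R : Type} [CommRing R] (x b : ℕ → R)

theorem epoly_zero (c : ℕ) : epoly 0 c b = 1 := by
  simp [epoly]

theorem epoly_of_lt {r c : ℕ} (h : c < r) : epoly r c b = 0 := by
  rw [epoly, Finset.powersetCard_eq_empty.2 (by simpa using h), Finset.sum_empty]

theorem epoly_succ (r c : ℕ) :
    epoly (r + 1) (c + 1) b = epoly (r + 1) c b + b (c + 1) * epoly r c b := by
  have hne : (c + 1) ∉ Finset.Icc 1 c := by simp
  have hins : Finset.Icc 1 (c + 1) = insert (c + 1) (Finset.Icc 1 c) := by
    ext t; simp [Finset.mem_Icc, Finset.mem_insert]; omega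
  rw [epoly, hins, Finset.powersetCard_succ_insert hne, Finset.sum_union, epoly, epoly]
  · congr 1
    rw [Finset.sum_image, Finset.mul_sum]
    · refine Finset.sum_congr rfl fun S hS => ?_
      rw [Finset.prod_insert]
      intro hmem
      exact hne ((Finset.mem_powersetCard.1 hS).1 hmem)
    · intro S hS T hT hST
      have hS' := Finset.mem_powersetCard.1 hS
      have hT' := Finset.mem_powersetCard.1 hT
      have : ∀ (U : Finset ℕ), U ⊆ Finset.Icc 1 c → (insert (c+1) U).erase (c+1) = U := by
        intro U hU
        rw [Finset.erase_insert]
        intro hmem; exact hne (hU hmem)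
      rw [← this S hS'.1, ← this T hT'.1, hST]
  · -- disjoint
    rw [Finset.disjoint_left]
    intro S hS hS'
    obtain ⟨T, hT, rfl⟩ := Finset.mem_image.1 hS'
    have := (Finset.mem_powersetCard.1 hS).1
    exact hne (this (Finset.mem_insert_self _ _))

theorem hpoly_zero (m : ℕ) : hpoly 0 m x = 1 := by
  rw [hpoly, Finset.Nat.antidiagonalTuple_zero_right, Finset.sum_singleton]
  simp

theorem hpoly_zero_vars (k : ℕ) : hpoly k 0 x = if k = 0 then 1 else 0 := by
  cases k with
  | zero => simp [hpoly_zero]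
  | succ k => rw [hpoly, Finset.Nat.antidiagonalTuple_zero_succ, Finset.sum_empty]; simp

theorem hpoly_succ_vars (k m : ℕ) :
    hpoly k (m + 1) x = ∑ d ∈ Finset.range (k + 1), x (m + 1) ^ d * hpoly (k - d) m x := by
  classical
  rw [hpoly]
  have : ∀ d ∈ Finset.range (k+1), x (m+1) ^ d * hpoly (k - d) m x
      = ∑ β ∈ Finset.Nat.antidiagonalTuple m (k - d), x (m+1) ^ d * ∏ i : Fin m, x ((i:ℕ)+1) ^ β i := by
    intro d _
    rw [hpoly, Finset.mul_sum]
  rw [Finset.sum_congr rfl this, Finset.sum_sigma']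
  refine Finset.sum_nbij' (fun α => (⟨α (Fin.last m), Fin.init α⟩ : (_ : ℕ) × (Fin m → ℕ)))
    (fun p => Fin.snoc p.2 p.1) ?_ ?_ ?_ ?_ ?_
  · intro α hα
    rw [Finset.Nat.mem_antidiagonalTuple] at hα
    have hsum : (∑ i : Fin m, Fin.init α i) + α (Fin.last m) = k := by
      rw [← hα, Fin.sum_univ_castSucc]; rfl
    simp only [Finset.mem_sigma, Finset.mem_range, Finset.Nat.mem_antidiagonalTuple]
    omega
  · rintro ⟨d, β⟩ hp
    simp only [Finset.mem_sigma, Finset.mem_range, Finset.Nat.mem_antidiagonalTuple] at hp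
    rw [Finset.Nat.mem_antidiagonalTuple, Fin.sum_univ_castSucc]
    simp only [Fin.snoc_castSucc, Fin.snoc_last]
    omega
  · intro α hα
    exact Fin.snoc_init_self α
  · rintro ⟨d, β⟩ hp
    simp only [Fin.snoc_last, Fin.init_snoc]
  · intro α hα
    rw [Fin.prod_univ_castSucc]
    simp only [Fin.snoc_castSucc, Fin.snoc_last, Fin.val_last, Fin.coe_castSucc, Fin.init]
    ring

theorem hpoly_rec (k m : ℕ) (hk : 1 ≤ k) :
    hpoly k (m + 1) x = hpoly k m x + x (m + 1) * hpoly (k - 1) (m + 1) x := by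
  rw [hpoly_succ_vars x k m, Finset.sum_range_succ']
  simp only [pow_zero, one_mul, Nat.sub_zero]
  rw [add_comm]
  congr 1
  rw [hpoly_succ_vars x (k-1) m, Finset.mul_sum]
  have hrange : k - 1 + 1 = k := by omega
  rw [hrange]
  refine Finset.sum_congr rfl fun d hd => ?_
  have : k - (d + 1) = k - 1 - d := by omega
  rw [this, pow_succ]
  ring


/-- The alternating sum `Σ_{r=0}^{k} (-1)^r e_r(b_1..b_w) h_{k-r}(x_1..x_m)`. -/
def Afun (k w m : ℕ) (x b : ℕ → R) : R :=
  ∑ r ∈ Finset.range (k + 1), (-1) ^ r * epoly r w b * hpoly (k - r) m x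

theorem Afun_zero (w m : ℕ) : Afun 0 w m x b = 1 := by
  simp [Afun, epoly_zero, hpoly_zero]

theorem epoly_c_zero (r : ℕ) : epoly r 0 b = if r = 0 then 1 else 0 := by
  cases r with
  | zero => simp [epoly_zero]
  | succ r => rw [epoly_of_lt b (Nat.succ_pos r)]; simp

theorem Afun_m_zero (k w : ℕ) : Afun k w 0 x b = (-1) ^ k * epoly k w b := by
  rw [Afun, Finset.sum_eq_single k]
  · rw [Nat.sub_self, hpoly_zero, mul_one]
  · intro r hr hrk
    rw [Finset.mem_range] at hr
    rw [hpoly_zero_vars, if_neg (by omega), mul_zero]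
  · intro h; exact absurd (Finset.self_mem_range_succ k) h

/-- Step 1: adding a `b`-variable. -/
theorem Afun_b_step (k w m : ℕ) (hk : 1 ≤ k) :
    Afun k (w + 1) m x b = Afun k w m x b - b (w + 1) * Afun (k - 1) w m x b := by
  rw [Afun, Afun, Afun, Finset.sum_range_succ', Finset.sum_range_succ']
  have hko : k - 1 + 1 = k := by omega
  rw [hko, Finset.mul_sum]
  have hterm : ∀ r ∈ Finset.range k,
      (-1:R) ^ (r + 1) * epoly (r + 1) (w + 1) b * hpoly (k - (r + 1)) m x
      = (-1) ^ (r + 1) * epoly (r + 1) w b * hpoly (k - (r + 1)) m x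
        - b (w + 1) * ((-1) ^ r * epoly r w b * hpoly (k - 1 - r) m x) := by
    intro r hr
    rw [epoly_succ]
    have h1 : k - (r + 1) = k - 1 - r := by omega
    rw [h1]
    ring
  rw [Finset.sum_congr rfl hterm, Finset.sum_sub_distrib, epoly_zero, epoly_zero]
  ring

/-- Step 2: adding an `x`-variable. -/
theorem Afun_x_step (k w m : ℕ) (hk : 1 ≤ k) :
    Afun k w (m + 1) x b = Afun k w m x b + x (m + 1) * Afun (k - 1) w (m + 1) x b := by
  rw [Afun, Afun, Afun, Finset.sum_range_succ, Finset.sum_range_succ]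
  have hko : k - 1 + 1 = k := by omega
  rw [hko, Finset.mul_sum]
  rw [Nat.sub_self, hpoly_zero, hpoly_zero]
  have : ∀ r ∈ Finset.range k,
      (-1:R) ^ r * epoly r w b * hpoly (k - r) (m+1) x
      = (-1) ^ r * epoly r w b * hpoly (k - r) m x
        + x (m+1) * ((-1) ^ r * epoly r w b * hpoly (k - 1 - r) (m+1) x) := by
    intro r hr
    rw [Finset.mem_range] at hr
    rw [hpoly_rec x (k - r) m (by omega)]
    have h1 : k - r - 1 = k - 1 - r := by omega
    rw [h1]
    ring
  rw [Finset.sum_congr rfl this, Finset.sum_add_distrib]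
  ring

/-- The key entrywise identity (EI). -/
theorem Afun_key (k w m : ℕ) (hk : 1 ≤ k) (hm : 1 ≤ m) :
    Afun k w m x b = Afun k (w - 1) (m - 1) x b
      + (x m - if w = 0 then 0 else b w) * Afun (k - 1) (w - 1) m x b := by
  obtain ⟨m', rfl⟩ : ∃ m', m = m' + 1 := ⟨m - 1, by omega⟩
  cases w with
  | zero =>
    rw [if_pos rfl, sub_zero]
    simpa using Afun_x_step x b k 0 m' hk
  | succ w' =>
    rw [if_neg (Nat.succ_ne_zero w')]
    have h1 : w' + 1 - 1 = w' := by omega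
    have h2 : m' + 1 - 1 = m' := by omega
    rw [h1, h2, Afun_b_step x b k w' (m'+1) hk, Afun_x_step x b k w' m' hk]
    ring


/-- Generic matrix entry in a row with row length `L`, flag `M`, row index `r`. -/
def pent (L M r j : ℕ) : R :=
  if L + j < r then 0 else Afun (L + j - r) (L + M - (r + 1)) M x b

theorem pent_key (L M r j : ℕ) (hL : 1 ≤ L) (hM : 1 ≤ M) :
    pent x b L M r j = pent x b L (M - 1) r j
      + (x M - if L + M - (r + 1) = 0 then 0 else b (L + M - (r + 1)))
        * pent x b (L - 1) M r j := by
  have e0 : ∀ L' M' : ℕ, pent x b L' M' r j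
      = if L' + j < r then 0 else Afun (L' + j - r) (L' + M' - (r + 1)) M' x b := fun _ _ => rfl
  by_cases h1 : L + j < r
  · rw [e0 L M, e0 L (M-1), e0 (L-1) M, if_pos h1, if_pos h1, if_pos (show L-1+j < r by omega)]
    ring
  by_cases h2 : L + j = r
  · rw [e0 L M, e0 L (M-1), e0 (L-1) M, if_neg h1, if_neg h1, if_pos (show L-1+j < r by omega)]
    have hz : L + j - r = 0 := by omega
    rw [hz, Afun_zero, Afun_zero]
    ring
  · rw [e0 L M, e0 L (M-1), e0 (L-1) M, if_neg h1, if_neg h1,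
      if_neg (show ¬ (L-1+j < r) by omega)]
    have hk : 1 ≤ L + j - r := by omega
    have e1 : L + (M - 1) - (r + 1) = L + M - (r + 1) - 1 := by omega
    have e2 : L - 1 + M - (r + 1) = L + M - (r + 1) - 1 := by omega
    have e3 : L - 1 + j - r = L + j - r - 1 := by omega
    rw [e1, e2, e3]
    exact Afun_key x b (L + j - r) (L + M - (r + 1)) M hk hM

/-- Determinant splits along a distinguished row. -/
theorem det_peel {n : ℕ} (A B C : Matrix (Fin n) (Fin n) R) (r : Fin n) (F : R)
    (hB : ∀ i, i ≠ r → B i = A i) (hC : ∀ i, i ≠ r → C i = A i)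
    (hrow : ∀ j, A r j = B r j + F * C r j) :
    A.det = B.det + F * C.det := by
  have hA : A = B.updateRow r (B r + F • C r) := by
    ext i j
    by_cases hi : i = r
    · subst hi
      rw [Matrix.updateRow_self]
      simpa using hrow j
    · rw [Matrix.updateRow_ne hi, hB i hi]
  rw [hA, Matrix.det_updateRow_add, Matrix.det_updateRow_smul, Matrix.updateRow_eq_self]
  have hCC : B.updateRow r (C r) = C := by
    ext i j
    by_cases hi : i = r
    · subst hi; rw [Matrix.updateRow_self]
    · rw [Matrix.updateRow_ne hi, hB i hi, ← hC i hi]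
  rw [hCC]

/-- Determinant is invariant under adding a multiple of another row. -/
theorem det_rowop {n : ℕ} (A B : Matrix (Fin n) (Fin n) R) (r s : Fin n) (hrs : r ≠ s) (F : R)
    (hB : ∀ i, i ≠ r → B i = A i)
    (hrow : ∀ j, A r j = B r j + F * B s j) :
    A.det = B.det := by
  have hA : A = B.updateRow r (B r + F • B s) := by
    ext i j
    by_cases hi : i = r
    · subst hi
      rw [Matrix.updateRow_self]
      simpa using hrow j
    · rw [Matrix.updateRow_ne hi, hB i hi]
  rw [hA, Matrix.det_updateRow_add_smul_self B hrs F]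

/-- Expanding along a last row which is `(0, …, 0, 1)`. -/
theorem det_last_row {n : ℕ} (A : Matrix (Fin (n + 1)) (Fin (n + 1)) R)
    (h0 : ∀ j : Fin (n + 1), (j : ℕ) < n → A (Fin.last n) j = 0)
    (h1 : A (Fin.last n) (Fin.last n) = 1) :
    A.det = (A.submatrix Fin.castSucc Fin.castSucc).det := by
  rw [Matrix.det_succ_row A (Fin.last n)]
  rw [Finset.sum_eq_single (Fin.last n)]
  · rw [h1, Fin.succAbove_last]
    have hone : ((-1 : R)) ^ ((Fin.last n : ℕ) + (Fin.last n : ℕ)) = 1 := by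
      rw [Fin.val_last, ← two_mul, pow_mul]
      norm_num
    rw [hone]
    ring
  · intro j _ hj
    have hjn : (j : ℕ) < n := by
      rcases eq_or_lt_of_le (Fin.le_last j) with h | h
      · exact absurd h hj
      · simpa [Fin.lt_def] using h
    rw [h0 j hjn, mul_zero, zero_mul]
  · intro h; exact absurd (Finset.mem_univ _) h

/-- Helper to compute `rowLen` from a membership criterion. -/
theorem rowLen_eq_of_mem_iff {ν : YoungDiagram} {i v : ℕ} (h : ∀ j, (i, j) ∈ ν ↔ j < v) :
    ν.rowLen i = v := by
  have h1 : ν.rowLen i ≤ v := by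
    by_contra hc
    have : (i, v) ∈ ν := YoungDiagram.mem_iff_lt_rowLen.2 (by omega)
    exact absurd ((h v).1 this) (by omega)
  have h2 : v ≤ ν.rowLen i := by
    rcases Nat.eq_zero_or_pos v with hv | hv
    · omega
    · have : (i, v - 1) ∈ ν := (h (v - 1)).2 (by omega)
      have := YoungDiagram.mem_iff_lt_rowLen.1 this
      omega
  omega

/-- Erasing a removable corner cell from a Young diagram. -/
def erase (μ : YoungDiagram) (c : ℕ × ℕ) (hb : (c.1 + 1, c.2) ∉ μ) (hr : (c.1, c.2 + 1) ∉ μ) :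
    YoungDiagram where
  cells := μ.cells.erase c
  isLowerSet := by
    intro a b hba ha
    rw [Finset.mem_coe, Finset.mem_erase] at ha ⊢
    obtain ⟨hane, hamem⟩ := ha
    rw [YoungDiagram.mem_cells] at hamem
    refine ⟨?_, (YoungDiagram.mem_cells _).2 (μ.isLowerSet hba hamem)⟩
    rintro rfl
    obtain ⟨h1, h2⟩ := hba
    rcases Nat.lt_or_ge b.1 a.1 with hlt | hge
    · exact hb (μ.isLowerSet (by constructor <;> simp <;> omega) hamem)
    · have hb1 : b.1 = a.1 := by omega
      have hb2 : b.2 < a.2 := by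
        rcases Nat.lt_or_ge b.2 a.2 with h | h
        · exact h
        · exfalso; apply hane; ext <;> omega
      exact hr (μ.isLowerSet (by constructor <;> simp <;> omega) hamem)

theorem mem_erase_iff {μ : YoungDiagram} {c : ℕ × ℕ} {hb} {hr} {u : ℕ × ℕ} :
    u ∈ erase μ c hb hr ↔ u ≠ c ∧ u ∈ μ := by
  change u ∈ (erase μ c hb hr).cells ↔ _
  rw [show (erase μ c hb hr).cells = μ.cells.erase c from rfl, Finset.mem_erase,
    YoungDiagram.mem_cells]


/-- The set of semistandard Young tableaux obeying a row flag `m`. -/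
def flagSet (μ : YoungDiagram) (m : ℕ → ℕ) : Set (SemistandardYoungTableau μ) :=
  {T | ∀ i j, (i, j) ∈ μ → T i j < m i}

/-- The weight of a tableau. -/
def wt (μ : YoungDiagram) (x b : ℕ → R) (T : SemistandardYoungTableau μ) : R :=
  ∏ u ∈ μ.cells, (x (T u.1 u.2 + 1) - b (T u.1 u.2 + 1 + u.2 - u.1))

theorem le_entry {μ : YoungDiagram} (T : SemistandardYoungTableau μ) :
    ∀ i j, (i, j) ∈ μ → i ≤ T i j := by
  intro i
  induction i with
  | zero => intro j _; exact Nat.zero_le _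
  | succ i ih =>
    intro j hij
    show i + 1 ≤ T (i + 1) j
    have h1 : (i, j) ∈ μ := μ.up_left_mem (Nat.le_succ i) le_rfl hij
    have h2 : T i j < T (i + 1) j := T.col_strict (by omega) hij
    have := ih j h1
    omega

theorem flagSet_finite (μ : YoungDiagram) (m : ℕ → ℕ) : (flagSet μ m).Finite := by
  classical
  rw [← Set.finite_coe_iff]
  set B := μ.cells.sup (fun u => m u.1) with hB
  let f : flagSet μ m → (μ.cells → Fin (B + 1)) := fun T c =>
    ⟨T.1 c.1.1 c.1.2, by
      obtain ⟨⟨i, j⟩, hc⟩ := c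
      have h1 : T.1 i j < m i := T.2 i j ((YoungDiagram.mem_cells _).1 hc)
      have h2 : m i ≤ B := Finset.le_sup (f := fun u : ℕ × ℕ => m u.1) hc
      simp only
      omega⟩
  have hf : Function.Injective f := by
    intro T T' h
    have hval : ∀ u : μ.cells, T.1 u.1.1 u.1.2 = T'.1 u.1.1 u.1.2 := by
      intro u
      have := congrFun h u
      exact congrArg Fin.val this
    apply Subtype.ext
    ext i j
    by_cases hc : (i, j) ∈ μ
    · exact hval ⟨(i, j), (YoungDiagram.mem_cells _).2 hc⟩
    · rw [T.1.zeros hc, T'.1.zeros hc]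
  exact Finite.of_injective f hf

/-- Deleting a corner cell from a tableau. -/
def delT {μ : YoungDiagram} {c : ℕ × ℕ} {hb : (c.1 + 1, c.2) ∉ μ} {hr : (c.1, c.2 + 1) ∉ μ}
    (T : SemistandardYoungTableau μ) : SemistandardYoungTableau (erase μ c hb hr) where
  entry i j := if (i, j) = c then 0 else T i j
  row_weak' := by
    intro i j1 j2 hj hcell
    rw [mem_erase_iff] at hcell
    rw [if_neg hcell.1]
    by_cases h1 : (i, j1) = c
    · rw [if_pos h1]; exact Nat.zero_le _
    · rw [if_neg h1]; exact T.row_weak hj hcell.2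
  col_strict' := by
    intro i1 i2 j hi hcell
    rw [mem_erase_iff] at hcell
    rw [if_neg hcell.1]
    by_cases h1 : (i1, j) = c
    · rw [if_pos h1]
      have := T.col_strict hi hcell.2
      omega
    · rw [if_neg h1]; exact T.col_strict hi hcell.2
  zeros' := by
    intro i j hcell
    rw [mem_erase_iff] at hcell
    by_cases h1 : (i, j) = c
    · rw [if_pos h1]
    · rw [if_neg h1]
      exact T.zeros (by tauto)

theorem delT_apply {μ : YoungDiagram} {c : ℕ × ℕ} {hb : (c.1 + 1, c.2) ∉ μ}
    {hr : (c.1, c.2 + 1) ∉ μ} (T : SemistandardYoungTableau μ) (i j : ℕ) :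
    (delT (hb := hb) (hr := hr) T) i j = if (i, j) = c then 0 else T i j := rfl


theorem flag_fc {μ : YoungDiagram} {m : ℕ → ℕ} {s M : ℕ} (hms : m s = M)
    (hms1 : m (s + 1) = M) (hlen : μ.rowLen (s + 1) = μ.rowLen s) :
    flagSet μ m = flagSet μ (Function.update m s (M - 1)) := by
  ext T
  constructor
  · intro hT i j hij
    by_cases hi : i = s
    · rw [hi, Function.update_self]
      rw [hi] at hij
      have hcell : (s + 1, j) ∈ μ := by
        rw [YoungDiagram.mem_iff_lt_rowLen, hlen]
        exact YoungDiagram.mem_iff_lt_rowLen.1 hij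
      have h1 : T s j < T (s + 1) j := T.col_strict (by omega) hcell
      have h2 : T (s + 1) j < m (s + 1) := hT (s + 1) j hcell
      omega
    · rw [Function.update_of_ne hi]
      exact hT i j hij
  · intro hT i j hij
    have h := hT i j hij
    by_cases hi : i = s
    · rw [hi] at h ⊢
      rw [Function.update_self] at h
      omega
    · rwa [Function.update_of_ne hi] at h

theorem flag_split {μ : YoungDiagram} {m : ℕ → ℕ} {r L M : ℕ}
    (hrowL : μ.rowLen r = L) (hL1 : 1 ≤ L) (hmr : m r = M) :
    flagSet μ m = flagSet μ (Function.update m r (M - 1))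
        ∪ {T ∈ flagSet μ m | T r (L - 1) = M - 1} := by
  have hc₀ : (r, L - 1) ∈ μ := YoungDiagram.mem_iff_lt_rowLen.2 (by omega)
  ext T
  constructor
  · intro hT
    by_cases hv : T r (L - 1) = M - 1
    · exact Or.inr ⟨hT, hv⟩
    · left
      intro i j hij
      by_cases hi : i = r
      · rw [hi, Function.update_self]
        rw [hi] at hij
        have hj : j ≤ L - 1 := by
          have := YoungDiagram.mem_iff_lt_rowLen.1 hij
          omega
        have h1 : T r j ≤ T r (L - 1) := T.row_weak_of_le hj hc₀
        have h2 : T r (L - 1) < M := by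
          have := hT r (L - 1) hc₀
          omega
        omega
      · rw [Function.update_of_ne hi]
        exact hT i j hij
  · rintro (hT | hT)
    · intro i j hij
      have h := hT i j hij
      by_cases hi : i = r
      · rw [hi] at h ⊢
        rw [Function.update_self] at h
        omega
      · rwa [Function.update_of_ne hi] at h
    · exact hT.1

theorem flag_disjoint {μ : YoungDiagram} {m : ℕ → ℕ} {r L M : ℕ}
    (hrowL : μ.rowLen r = L) (hL1 : 1 ≤ L) :
    Disjoint (flagSet μ (Function.update m r (M - 1)))
      {T ∈ flagSet μ m | T r (L - 1) = M - 1} := by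
  have hc₀ : (r, L - 1) ∈ μ := YoungDiagram.mem_iff_lt_rowLen.2 (by omega)
  rw [Set.disjoint_left]
  rintro T h1 ⟨_, h2⟩
  have := h1 r (L - 1) hc₀
  rw [Function.update_self] at this
  omega

theorem flag_peel (μ : YoungDiagram) (m : ℕ → ℕ) (r L M : ℕ)
    (hrowL : μ.rowLen r = L) (hL1 : 1 ≤ L) (hmr : m r = M) (hM1 : 1 ≤ M)
    (habove : ∀ i, i < r → m i < M)
    (hb : ((r, L - 1).1 + 1, (r, L - 1).2) ∉ μ) (hrc : ((r, L - 1).1, (r, L - 1).2 + 1) ∉ μ) :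
    ∑ᶠ T ∈ {T ∈ flagSet μ m | T r (L - 1) = M - 1}, wt μ x b T
      = (x (M - 1 + 1) - b (M - 1 + 1 + (L - 1) - r)) *
          ∑ᶠ T' ∈ flagSet (erase μ (r, L - 1) hb hrc) m,
            wt (erase μ (r, L - 1) hb hrc) x b T' := by
  classical
  have hc₀ : (r, L - 1) ∈ μ := YoungDiagram.mem_iff_lt_rowLen.2 (by omega)
  -- Step A : rewrite the sum via the bijection `delT`.
  have stepA : ∑ᶠ T ∈ {T ∈ flagSet μ m | T r (L - 1) = M - 1}, wt μ x b T
      = ∑ᶠ T' ∈ flagSet (erase μ (r, L - 1) hb hrc) m,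
          (x (M - 1 + 1) - b (M - 1 + 1 + (L - 1) - r))
            * wt (erase μ (r, L - 1) hb hrc) x b T' := by
    refine finsum_mem_eq_of_bijOn (delT (hb := hb) (hr := hrc)) ⟨?_, ?_, ?_⟩ ?_
    · -- MapsTo
      rintro T ⟨hT, _⟩ i j hij
      rw [mem_erase_iff] at hij
      rw [delT_apply, if_neg hij.1]
      exact hT i j hij.2
    · -- InjOn
      rintro T ⟨hT, hTv⟩ T2 ⟨hT2, hT2v⟩ hEq
      ext i j
      by_cases hij : (i, j) = (r, L - 1)
      · have hi : i = r := congrArg Prod.fst hij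
        have hj : j = L - 1 := congrArg Prod.snd hij
        rw [hi, hj, hTv, hT2v]
      · have h := congrFun (DFunLike.congr_fun hEq i) j
        rw [delT_apply, delT_apply, if_neg hij, if_neg hij] at h
        exact h
    · -- SurjOn
      rintro T' hT'
      have hins_rw : ∀ {i j1 j2 : ℕ}, j1 < j2 → (i, j2) ∈ μ →
          (if (i, j1) = (r, L - 1) then M - 1 else T' i j1)
            ≤ (if (i, j2) = (r, L - 1) then M - 1 else T' i j2) := by
        intro i j1 j2 hj hcell
        by_cases h2 : (i, j2) = (r, L - 1)
        · have hi : i = r := congrArg Prod.fst h2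
          have hjj : j2 = L - 1 := congrArg Prod.snd h2
          rw [if_pos h2, if_neg (by rintro h3; have := congrArg Prod.snd h3; simp at this; omega)]
          have hcell1 : (r, j1) ∈ (erase μ (r, L - 1) hb hrc) := by
            rw [mem_erase_iff]
            constructor
            · rintro h3
              have := congrArg Prod.snd h3
              simp at this
              omega
            · exact μ.up_left_mem (by omega) (by omega) hc₀
          have := hT' r j1 hcell1
          rw [hi]
          omega
        · rw [if_neg h2]
          by_cases h1 : (i, j1) = (r, L - 1)
          · exfalso
            have hi : i = r := congrArg Prod.fst h1
            have hjj : j1 = L - 1 := congrArg Prod.snd h1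
            have := YoungDiagram.mem_iff_lt_rowLen.1 hcell
            rw [hi] at this
            rw [hrowL] at this
            omega
          · rw [if_neg h1]
            exact T'.row_weak hj (mem_erase_iff.2 ⟨h2, hcell⟩)
      have hins_cs : ∀ {i1 i2 j : ℕ}, i1 < i2 → (i2, j) ∈ μ →
          (if (i1, j) = (r, L - 1) then M - 1 else T' i1 j)
            < (if (i2, j) = (r, L - 1) then M - 1 else T' i2 j) := by
        intro i1 i2 j hi hcell
        by_cases h2 : (i2, j) = (r, L - 1)
        · have hi2 : i2 = r := congrArg Prod.fst h2
          have hjj : j = L - 1 := congrArg Prod.snd h2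
          rw [if_pos h2, if_neg (by rintro h3; have := congrArg Prod.fst h3; simp at this; omega)]
          have hcell1 : (i1, L - 1) ∈ (erase μ (r, L - 1) hb hrc) := by
            rw [mem_erase_iff]
            constructor
            · rintro h3
              have := congrArg Prod.fst h3
              simp at this
              omega
            · exact μ.up_left_mem (by omega) (by omega) hc₀
          have hflag := hT' i1 (L - 1) hcell1
          have hsmall : m i1 < M := habove i1 (by omega)
          rw [hjj]
          omega
        · rw [if_neg h2]
          by_cases h1 : (i1, j) = (r, L - 1)
          · exfalso
            have hi1 : i1 = r := congrArg Prod.fst h1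
            have hjj : j = L - 1 := congrArg Prod.snd h1
            apply hb
            refine μ.up_left_mem (by omega) (by omega) hcell
          · rw [if_neg h1]
            exact T'.col_strict hi (mem_erase_iff.2 ⟨h2, hcell⟩)
      have hins_z : ∀ {i j : ℕ}, (i, j) ∉ μ →
          (if (i, j) = (r, L - 1) then M - 1 else T' i j) = 0 := by
        intro i j hcell
        rw [if_neg (by intro h1; rw [← h1] at hc₀; exact hcell hc₀)]
        exact T'.zeros (by rw [mem_erase_iff]; tauto)
      refine ⟨⟨fun i j => if (i, j) = (r, L - 1) then M - 1 else T' i j,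
        hins_rw, hins_cs, hins_z⟩, ⟨?_, ?_⟩, ?_⟩
      · -- flag membership
        intro i j hij
        show (if (i, j) = (r, L - 1) then M - 1 else T' i j) < m i
        by_cases h1 : (i, j) = (r, L - 1)
        · have hi : i = r := congrArg Prod.fst h1
          rw [if_pos h1, hi, hmr]
          omega
        · rw [if_neg h1]
          exact hT' i j (mem_erase_iff.2 ⟨h1, hij⟩)
      · -- corner value
        show (if ((r : ℕ), L - 1) = (r, L - 1) then M - 1 else T' r (L - 1)) = M - 1
        rw [if_pos rfl]
      · -- delT of it is T'
        ext i j
        rw [delT_apply]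
        by_cases h1 : (i, j) = (r, L - 1)
        · rw [if_pos h1]
          have : (i, j) ∉ (erase μ (r, L - 1) hb hrc) := by
            rw [h1, mem_erase_iff]
            tauto
          exact (T'.zeros this).symm
        · rw [if_neg h1]
          show (if (i, j) = (r, L - 1) then M - 1 else T' i j) = T' i j
          rw [if_neg h1]
    · -- weights
      rintro T ⟨hT, hTv⟩
      have hsplit : wt μ x b T
          = (x (T r (L - 1) + 1) - b (T r (L - 1) + 1 + (L - 1) - r))
            * ∏ u ∈ (erase μ (r, L - 1) hb hrc).cells,
                (x (T u.1 u.2 + 1) - b (T u.1 u.2 + 1 + u.2 - u.1)) := by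
        rw [wt, ← Finset.insert_erase ((YoungDiagram.mem_cells (μ := μ) _).2 hc₀),
          Finset.prod_insert (Finset.notMem_erase _ _)]
        rfl
      rw [hsplit, hTv]
      congr 1
      rw [wt]
      refine Finset.prod_congr rfl fun u hu => ?_
      have hune : u ≠ (r, L - 1) := by
        rw [YoungDiagram.mem_cells, mem_erase_iff] at hu
        exact hu.1
      have : (delT (hb := hb) (hr := hrc) T) u.1 u.2 = T u.1 u.2 := by
        rw [delT_apply, if_neg (by rwa [Prod.mk.eta])]
      rw [this]
  rw [stepA]
  -- Step B : pull out the constant factor.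
  rw [finsum_mem_eq_finite_toFinset_sum _ (flagSet_finite _ m),
    finsum_mem_eq_finite_toFinset_sum _ (flagSet_finite _ m), ← Finset.mul_sum]


theorem pent_of_lt {L M r j : ℕ} (h : L + j < r) : pent x b L M r j = 0 := if_pos h

theorem pent_diag {L M r j : ℕ} (h : L + j = r) : pent x b L M r j = 1 := by
  rw [pent, if_neg (by omega), show L + j - r = 0 by omega, Afun_zero]

theorem pent_flag0 {L j : ℕ} (hL : 1 ≤ L) : pent x b L 0 0 j = 0 := by
  rw [pent, if_neg (by omega), Afun_m_zero, epoly_of_lt b (by omega), mul_zero]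

theorem pent_shift {L M s j : ℕ} (hL : 1 ≤ L) :
    pent x b (L - 1) M s j = pent x b L M (s + 1) j := by
  by_cases h : L - 1 + j < s
  · rw [pent_of_lt x b h, pent_of_lt x b (by omega)]
  · rw [pent, if_neg h, pent, if_neg (by omega)]
    rw [show L - 1 + j - s = L + j - (s + 1) by omega,
      show L - 1 + M - (s + 1) = L + M - (s + 1 + 1) by omega]

theorem Pmat_pent {n : ℕ} (μ : YoungDiagram) (m : ℕ → ℕ) (i j : Fin n) :
    Pmat n μ m x b i j = pent x b (μ.rowLen i) (m i) i j := rfl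

theorem rowLen_erase_ne {μ : YoungDiagram} {c : ℕ × ℕ} {hb hrc} {i : ℕ} (h : i ≠ c.1) :
    (erase μ c hb hrc).rowLen i = μ.rowLen i := by
  refine rowLen_eq_of_mem_iff fun j => ?_
  rw [mem_erase_iff, YoungDiagram.mem_iff_lt_rowLen (μ := μ)]
  constructor
  · tauto
  · intro hj
    refine ⟨?_, hj⟩
    intro heq
    exact h (congrArg Prod.fst heq)

theorem rowLen_erase_self {μ : YoungDiagram} {r L : ℕ} {hb hrc}
    (hrowL : μ.rowLen r = L) (hL1 : 1 ≤ L) :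
    (erase μ (r, L - 1) hb hrc).rowLen r = L - 1 := by
  refine rowLen_eq_of_mem_iff fun j => ?_
  rw [mem_erase_iff, YoungDiagram.mem_iff_lt_rowLen (μ := μ), hrowL]
  constructor
  · rintro ⟨hne, hj⟩
    have : j ≠ L - 1 := by
      intro hj'
      exact hne (by rw [hj'])
    omega
  · intro hj
    constructor
    · intro heq
      have := congrArg Prod.snd heq
      simp at this
      omega
    · omega

theorem colLen_erase_le {μ : YoungDiagram} {c : ℕ × ℕ} {hb hrc} {n : ℕ}
    (h : μ.colLen 0 ≤ n) : (erase μ c hb hrc).colLen 0 ≤ n := by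
  by_contra hc
  have : (n, 0) ∈ erase μ c hb hrc := YoungDiagram.mem_iff_lt_colLen.2 (by omega)
  rw [mem_erase_iff] at this
  have := YoungDiagram.mem_iff_lt_colLen.1 this.2
  omega


theorem ML {R : Type} [CommRing R] (x b : ℕ → R) :
    ∀ (n k : ℕ) (μ : YoungDiagram) (m : ℕ → ℕ),
      μ.cells.card + (∑ i ∈ Finset.range n, m i) ≤ k →
      μ.colLen 0 ≤ n → (∀ i j, i ≤ j → j < n → m i ≤ m j) →
      Matrix.det (Matrix.of (Pmat n μ m x b)) = ∑ᶠ T ∈ flagSet μ m, wt μ x b T := by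
  intro n
  induction n using Nat.strong_induction_on with
  | _ n IHn =>
  intro k
  induction k using Nat.strong_induction_on with
  | _ k IHk =>
  intro μ m hk hl hmono
  match n, IHn with
  | 0, IHn =>
    -- base case : empty matrix, empty diagram
    have hμ : ∀ c : ℕ × ℕ, c ∉ μ := by
      intro c hc
      have h1 : c.1 < μ.colLen c.2 := YoungDiagram.mem_iff_lt_colLen.1 (by
        rw [show (c.1, c.2) = c from rfl]; exact hc)
      have h2 : μ.colLen c.2 ≤ μ.colLen 0 := μ.colLen_anti 0 c.2 (Nat.zero_le _)
      omega
    have hcells : μ.cells = ∅ := by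
      rw [Finset.eq_empty_iff_forall_notMem]
      intro c hc
      exact hμ c ((YoungDiagram.mem_cells c).1 hc)
    have hset : flagSet μ m = {SemistandardYoungTableau.highestWeight μ} := by
      ext T
      constructor
      · intro _
        refine Set.mem_singleton_iff.2 ?_
        ext i j
        rw [T.zeros (hμ (i, j)), SemistandardYoungTableau.highestWeight_apply,
          if_neg (hμ (i, j))]
      · intro _ i j hij
        exact absurd hij (hμ (i, j))
    rw [hset, finsum_mem_singleton, wt, hcells, Finset.prod_empty, Matrix.det_fin_zero]
  | (n' + 1), IHn =>
    by_cases hlast : μ.rowLen n' = 0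
    · -- case (b) : last row of the diagram is empty
      have hb0 : ∀ j : Fin (n' + 1), (j : ℕ) < n' →
          Matrix.of (Pmat (n' + 1) μ m x b) (Fin.last n') j = 0 := by
        intro j hj
        rw [Matrix.of_apply, Pmat_pent, Fin.val_last, hlast]
        exact pent_of_lt x b (by omega)
      have hb1 : Matrix.of (Pmat (n' + 1) μ m x b) (Fin.last n') (Fin.last n') = 1 := by
        rw [Matrix.of_apply, Pmat_pent, Fin.val_last, hlast]
        exact pent_diag x b (by omega)
      have hsub : (Matrix.of (Pmat (n' + 1) μ m x b)).submatrix Fin.castSucc Fin.castSucc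
          = Matrix.of (Pmat n' μ m x b) := by
        ext i j
        rw [Matrix.submatrix_apply, Matrix.of_apply, Matrix.of_apply, Pmat_pent, Pmat_pent,
          Fin.coe_castSucc, Fin.coe_castSucc]
      have hk' : μ.cells.card + (∑ i ∈ Finset.range n', m i) ≤ k := by
        have := Finset.sum_range_succ m n'
        omega
      have hl' : μ.colLen 0 ≤ n' := by
        by_contra hc
        have h1 : (n', 0) ∈ μ := YoungDiagram.mem_iff_lt_colLen.2 (by omega)
        have := YoungDiagram.mem_iff_lt_rowLen.1 h1
        omega
      exact (det_last_row _ hb0 hb1).trans (by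
        rw [hsub]
        exact IHn n' (by omega) k μ m hk' hl' (fun i j hij hj => hmono i j hij (by omega)))
    · -- the last diagram row is nonempty
      have hL0 : 1 ≤ μ.rowLen 0 := le_trans (by omega) (μ.rowLen_anti 0 n' (Nat.zero_le _))
      set L := μ.rowLen 0 with hLdef
      by_cases hm0 : m 0 = 0
      · -- case (i) : zero flag in first row
        have hempty : flagSet μ m = ∅ := by
          ext T
          simp only [Set.mem_empty_iff_false, iff_false]
          intro hT
          have h00 : (0, 0) ∈ μ := YoungDiagram.mem_iff_lt_rowLen.2 (by omega)
          have := hT 0 0 h00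
          omega
        rw [hempty, finsum_mem_empty]
        refine Matrix.det_eq_zero_of_row_eq_zero ⟨0, by omega⟩ fun j => ?_
        rw [Matrix.of_apply, Pmat_pent]
        have h0 : ((⟨0, by omega⟩ : Fin (n' + 1)) : ℕ) = 0 := rfl
        rw [h0, hm0]
        exact pent_flag0 x b hL0
      · -- m 0 ≥ 1
        have hcol : μ.colLen 0 = n' + 1 := by
          have h1 : n' < μ.colLen 0 := YoungDiagram.mem_iff_lt_colLen.1
            (YoungDiagram.mem_iff_lt_rowLen.2 (by omega) : (n', 0) ∈ μ)
          omega
        set r₀ := μ.colLen (L - 1) with hr₀def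
        have hr₀1 : 1 ≤ r₀ := by
          have : (0, L - 1) ∈ μ := YoungDiagram.mem_iff_lt_rowLen.2 (by omega)
          have := YoungDiagram.mem_iff_lt_colLen.1 this
          omega
        have hr₀n : r₀ ≤ n' + 1 := by
          have := μ.colLen_anti 0 (L - 1) (Nat.zero_le _)
          omega
        have hrowblock : ∀ i, i < r₀ → μ.rowLen i = L := by
          intro i hi
          have h1 : (i, L - 1) ∈ μ := YoungDiagram.mem_iff_lt_colLen.2 (by omega)
          have h2 := YoungDiagram.mem_iff_lt_rowLen.1 h1
          have h3 := μ.rowLen_anti 0 i (Nat.zero_le _)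
          omega
        have hcorner_b : (r₀, L - 1) ∉ μ := by
          intro hmem
          have := YoungDiagram.mem_iff_lt_colLen.1 hmem
          omega
        have hcorner_r : (r₀ - 1, L) ∉ μ := by
          intro hmem
          have := YoungDiagram.mem_iff_lt_rowLen.1 hmem
          have := hrowblock (r₀ - 1) (by omega)
          omega
        set M := m (r₀ - 1) with hMdef
        have hM1 : 1 ≤ M := by
          have := hmono 0 (r₀ - 1) (Nat.zero_le _) (by omega)
          omega
        by_cases hcase : 2 ≤ r₀ ∧ m (r₀ - 2) = M
        · -- case (ii) : FC chain
          obtain ⟨hr₀2, hm2⟩ := hcase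
          have hex : ∃ t, m t = M := ⟨r₀ - 1, hMdef.symm⟩
          set p := Nat.find hex with hpdef
          have hpspec : m p = M := Nat.find_spec hex
          have hpmin : ∀ i, i < p → m i ≠ M := fun i hi => Nat.find_min hex hi
          have hple : p ≤ r₀ - 2 := Nat.find_min' hex hm2
          have msand : ∀ t, p ≤ t → t ≤ r₀ - 1 → m t = M := by
            intro t h1 h2
            have ha : m p ≤ m t := hmono p t h1 (by omega)
            have hb2 : m t ≤ m (r₀ - 1) := hmono t (r₀ - 1) (by omega) (by omega)
            omega
          set D := r₀ - 1 - p with hDdef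
          set g : ℕ → ℕ → ℕ := fun d i => if p ≤ i ∧ i < p + d then M - 1 else m i with hgdef
          have hg0 : g 0 = m := by
            funext i
            simp only [hgdef]
            rw [if_neg (by omega)]
          have chain : ∀ d, d ≤ D →
              (Matrix.det (Matrix.of (Pmat (n' + 1) μ (g d) x b))
                  = Matrix.det (Matrix.of (Pmat (n' + 1) μ m x b))
                ∧ flagSet μ (g d) = flagSet μ m) := by
            intro d
            induction d with
            | zero => intro _; rw [hg0]; exact ⟨rfl, rfl⟩
            | succ d ih =>
              intro hd
              obtain ⟨ihdet, ihset⟩ := ih (by omega)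
              have hs2 : p + d ≤ r₀ - 2 := by omega
              have hupd : g (d + 1) = Function.update (g d) (p + d) (M - 1) := by
                funext i
                by_cases hi : i = p + d
                · rw [hi, Function.update_self]
                  simp only [hgdef]
                  rw [if_pos ⟨by omega, by omega⟩]
                · rw [Function.update_of_ne hi]
                  simp only [hgdef]
                  by_cases h2 : p ≤ i ∧ i < p + d
                  · rw [if_pos h2, if_pos ⟨h2.1, by omega⟩]
                  · rw [if_neg h2, if_neg (by omega)]
              have hgs : g d (p + d) = M := by
                simp only [hgdef]
                rw [if_neg (by omega)]
                exact msand (p + d) (by omega) (by omega)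
              have hgs1 : g d (p + d + 1) = M := by
                simp only [hgdef]
                rw [if_neg (by omega)]
                exact msand (p + d + 1) (by omega) (by omega)
              have hgs1' : g (d + 1) (p + d + 1) = M := by
                rw [hupd, Function.update_of_ne (by omega)]
                exact hgs1
              have hgs' : g (d + 1) (p + d) = M - 1 := by
                rw [hupd, Function.update_self]
              have hlenss : μ.rowLen (p + d + 1) = μ.rowLen (p + d) := by
                rw [hrowblock (p + d + 1) (by omega), hrowblock (p + d) (by omega)]
              have hdet : Matrix.det (Matrix.of (Pmat (n' + 1) μ (g d) x b))
                  = Matrix.det (Matrix.of (Pmat (n' + 1) μ (g (d + 1)) x b)) := by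
                have hsn : p + d < n' + 1 := by omega
                have hs1n : p + d + 1 < n' + 1 := by omega
                refine det_rowop (Matrix.of (Pmat (n' + 1) μ (g d) x b))
                  (Matrix.of (Pmat (n' + 1) μ (g (d + 1)) x b)) ⟨p + d, hsn⟩ ⟨p + d + 1, hs1n⟩
                  (by intro hq; exact absurd (congrArg Fin.val hq) (by simp))
                  (x M - (if L + M - (p + d + 1) = 0 then 0 else b (L + M - (p + d + 1)))) ?_ ?_
                · intro i hi
                  funext j
                  rw [Matrix.of_apply, Matrix.of_apply, Pmat_pent, Pmat_pent, hupd,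
                    Function.update_of_ne (by intro hq; exact hi (Fin.ext hq))]
                · intro j
                  rw [Matrix.of_apply, Matrix.of_apply, Matrix.of_apply, Pmat_pent, Pmat_pent,
                    Pmat_pent]
                  show pent x b (μ.rowLen (p + d)) (g d (p + d)) (p + d) j
                    = pent x b (μ.rowLen (p + d)) (g (d + 1) (p + d)) (p + d) j
                      + _ * pent x b (μ.rowLen (p + d + 1)) (g (d + 1) (p + d + 1)) (p + d + 1) j
                  rw [hgs, hgs', hgs1', hlenss, hrowblock (p + d) (by omega)]
                  rw [← pent_shift x b (by omega : 1 ≤ L)]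
                  exact pent_key x b L M (p + d) j (by omega) hM1
              have hset : flagSet μ (g (d + 1)) = flagSet μ (g d) := by
                rw [hupd]
                exact (flag_fc hgs hgs1 hlenss).symm
              exact ⟨hdet.symm.trans ihdet, hset.trans ihset⟩
          obtain ⟨hdetD, hsetD⟩ := chain D le_rfl
          have hm'p : g D p = M - 1 := by
            simp only [hgdef]
            rw [if_pos ⟨le_rfl, by omega⟩]
          have hm'le : ∀ i, g D i ≤ m i := by
            intro i
            simp only [hgdef]
            by_cases h2 : p ≤ i ∧ i < p + D
            · rw [if_pos h2]
              have := msand i (by omega) (by omega)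
              omega
            · rw [if_neg h2]
          have hm'mono : ∀ i j, i ≤ j → j < n' + 1 → g D i ≤ g D j := by
            intro i j hij hj
            simp only [hgdef]
            by_cases hi2 : p ≤ i ∧ i < p + D
            · by_cases hj2 : p ≤ j ∧ j < p + D
              · rw [if_pos hi2, if_pos hj2]
              · rw [if_pos hi2, if_neg hj2]
                have : m (r₀ - 1) ≤ m j := hmono (r₀ - 1) j (by omega) hj
                omega
            · by_cases hj2 : p ≤ j ∧ j < p + D
              · rw [if_neg hi2, if_pos hj2]
                have h1 : m i ≤ m (r₀ - 1) := hmono i (r₀ - 1) (by omega) (by omega)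
                have h2 : m i ≠ M := hpmin i (by omega)
                omega
              · rw [if_neg hi2, if_neg hj2]
                exact hmono i j hij hj
          have hsum : ∑ i ∈ Finset.range (n' + 1), g D i < ∑ i ∈ Finset.range (n' + 1), m i := by
            refine Finset.sum_lt_sum (fun i _ => hm'le i) ⟨p, Finset.mem_range.2 (by omega), ?_⟩
            rw [hm'p]
            omega
          have hres := IHk (μ.cells.card + ∑ i ∈ Finset.range (n' + 1), g D i) (by omega)
            μ (g D) le_rfl hl hm'mono
          rw [← hdetD, hres, hsetD]
        · -- case (iii) : peel the corner
          set r := r₀ - 1 with hrdef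
          have hrowr : μ.rowLen r = L := hrowblock r (by omega)
          have hc₀ : (r, L - 1) ∈ μ := YoungDiagram.mem_iff_lt_rowLen.2 (by omega)
          have habove : ∀ i, i < r → m i < M := by
            intro i hi
            have hr₀2 : 2 ≤ r₀ := by omega
            have hne : m (r₀ - 2) ≠ M := fun h => hcase ⟨hr₀2, h⟩
            have h1 : m i ≤ m (r₀ - 2) := hmono i (r₀ - 2) (by omega) (by omega)
            have h2 : m (r₀ - 2) ≤ m r := hmono (r₀ - 2) r (by omega) (by omega)
            omega
          have hbb : ((r, L - 1).1 + 1, (r, L - 1).2) ∉ μ := by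
            show (r + 1, L - 1) ∉ μ
            rw [show r + 1 = r₀ by omega]
            exact hcorner_b
          have hrr : ((r, L - 1).1, (r, L - 1).2 + 1) ∉ μ := by
            show (r, L - 1 + 1) ∉ μ
            rw [show L - 1 + 1 = L by omega]
            exact hcorner_r
          -- determinant peel
          have hdetpeel : Matrix.det (Matrix.of (Pmat (n' + 1) μ m x b))
              = Matrix.det (Matrix.of (Pmat (n' + 1) μ (Function.update m r (M - 1)) x b))
                + (x M - (if L + M - (r + 1) = 0 then 0 else b (L + M - (r + 1))))
                  * Matrix.det (Matrix.of (Pmat (n' + 1) (erase μ (r, L - 1) hbb hrr) m x b)) := by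
            have hrn : r < n' + 1 := by omega
            refine det_peel _ _ _ ⟨r, hrn⟩ _ ?_ ?_ ?_
            · intro i hi
              funext j
              rw [Matrix.of_apply, Matrix.of_apply, Pmat_pent, Pmat_pent,
                Function.update_of_ne (fun hq => hi (Fin.ext hq))]
            · intro i hi
              funext j
              rw [Matrix.of_apply, Matrix.of_apply, Pmat_pent, Pmat_pent,
                rowLen_erase_ne (show (i : ℕ) ≠ (r, L - 1).1 from fun hq => hi (Fin.ext hq))]
            · intro j
              rw [Matrix.of_apply, Matrix.of_apply, Matrix.of_apply, Pmat_pent, Pmat_pent,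
                Pmat_pent]
              show pent x b (μ.rowLen r) (m r) r j
                = pent x b (μ.rowLen r) (Function.update m r (M - 1) r) r j
                  + _ * pent x b ((erase μ (r, L - 1) hbb hrr).rowLen r) (m r) r j
              rw [hrowr, Function.update_self, rowLen_erase_self hrowr (by omega), ← hMdef]
              exact pent_key x b L M r j (by omega) hM1
          -- induction hypotheses
          have hsummd : (∑ i ∈ Finset.range (n' + 1), Function.update m r (M - 1) i) + 1
              = ∑ i ∈ Finset.range (n' + 1), m i := by
            rw [Finset.sum_update_of_mem (Finset.mem_range.2 (by omega : r < n' + 1)),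
              Finset.sdiff_singleton_eq_erase]
            have h2 := Finset.sum_erase_add (Finset.range (n' + 1)) m
              (Finset.mem_range.2 (by omega : r < n' + 1))
            omega
          have hmdmono : ∀ i j, i ≤ j → j < n' + 1 →
              Function.update m r (M - 1) i ≤ Function.update m r (M - 1) j := by
            intro i j hij hj
            by_cases hi2 : i = r
            · by_cases hj2 : j = r
              · rw [hi2, hj2]
              · rw [hi2, Function.update_self, Function.update_of_ne hj2]
                have : m r ≤ m j := hmono r j (by omega) hj
                omega
            · by_cases hj2 : j = r
              · rw [Function.update_of_ne hi2, hj2, Function.update_self]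
                have h3 : m i < M := habove i (by omega)
                omega
              · rw [Function.update_of_ne hi2, Function.update_of_ne hj2]
                exact hmono i j hij hj
          have hres1 := IHk (μ.cells.card + ∑ i ∈ Finset.range (n' + 1),
              Function.update m r (M - 1) i) (by omega) μ (Function.update m r (M - 1))
              le_rfl hl hmdmono
          have hcardν : (erase μ (r, L - 1) hbb hrr).cells.card + 1 = μ.cells.card := by
            show (μ.cells.erase (r, L - 1)).card + 1 = μ.cells.card
            rw [Finset.card_erase_of_mem ((YoungDiagram.mem_cells _).2 hc₀)]
            have : 1 ≤ μ.cells.card := Finset.card_pos.2 ⟨_, (YoungDiagram.mem_cells _).2 hc₀⟩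
            omega
          have hres2 := IHk ((erase μ (r, L - 1) hbb hrr).cells.card
              + ∑ i ∈ Finset.range (n' + 1), m i) (by omega)
              (erase μ (r, L - 1) hbb hrr) m le_rfl (colLen_erase_le hl) hmono
          -- tableau-side split
          have hsplitS : ∑ᶠ T ∈ flagSet μ m, wt μ x b T
              = (∑ᶠ T ∈ flagSet μ (Function.update m r (M - 1)), wt μ x b T)
                + ∑ᶠ T ∈ {T ∈ flagSet μ m | T r (L - 1) = M - 1}, wt μ x b T := by
            conv_lhs => rw [flag_split hrowr (by omega) hMdef.symm]
            exact finsum_mem_union (flag_disjoint hrowr (by omega)) (flagSet_finite _ _)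
              ((flagSet_finite μ m).subset fun T hT => hT.1)
          have hpeelS := flag_peel x b μ m r L M hrowr (by omega) hMdef.symm hM1 habove hbb hrr
          rw [hdetpeel, hres1, hres2, hsplitS, hpeelS]
          by_cases hw : L + M - (r + 1) = 0
          · have hν0 : flagSet (erase μ (r, L - 1) hbb hrr) m = ∅ := by
              ext T'
              simp only [Set.mem_empty_iff_false, iff_false]
              intro hT'
              by_cases hL2 : 2 ≤ L
              · have hcell : (r, 0) ∈ erase μ (r, L - 1) hbb hrr := by
                  rw [mem_erase_iff]
                  constructor
                  · intro hq
                    have := congrArg Prod.snd hq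
                    simp at this
                    omega
                  · exact YoungDiagram.mem_iff_lt_rowLen.2 (by omega)
                have h1 := le_entry T' r 0 hcell
                have h2 := hT' r 0 hcell
                omega
              · have hr1 : 1 ≤ r := by omega
                have hcell : (r - 1, 0) ∈ erase μ (r, L - 1) hbb hrr := by
                  rw [mem_erase_iff]
                  constructor
                  · intro hq
                    have := congrArg Prod.fst hq
                    simp at this
                    omega
                  · exact μ.up_left_mem (by omega) (by omega) hc₀
                have h1 := le_entry T' (r - 1) 0 hcell
                have h2 := hT' (r - 1) 0 hcell
                have h3 : m (r - 1) < M := habove (r - 1) (by omega)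
                omega
            rw [hν0, finsum_mem_empty]
            ring
          · have hFF : (x M - (if L + M - (r + 1) = 0 then 0 else b (L + M - (r + 1))))
                = (x (M - 1 + 1) - b (M - 1 + 1 + (L - 1) - r)) := by
              rw [if_neg hw, show M - 1 + 1 + (L - 1) - r = L + M - (r + 1) by omega,
                show M - 1 + 1 = M by omega]
            rw [hFF]

end FJT

/-- **Flagged Jacobi–Trudi type identity.** For a partition `μ` with `ℓ(μ) ≤ n` and a weakly
increasing sequence `m` of positive integers (the flag), with indeterminates `x`, `b`:
`det[P_{i,j}^{μ,m}(x | b)]_{i,j=1}^n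
  = Σ_{T ∈ SSYT(μ; m)} Π_{(i,j) ∈ μ} (x_{T(i,j)} - b_{T(i,j)+j-i})`,
the sum over flagged semistandard Young tableaux of shape `μ` with flag `m`.
(Mathlib `SemistandardYoungTableau`s have entries in `{0, 1, 2, …}`; the 1-indexed entry of
the mathematical tableau is `T i j + 1`, and the flag condition `T(i,j) ≤ m_i` reads
`T i j < m i`; `m` is 0-indexed by rows.) -/
theorem flagged_jacobi_trudi (n : ℕ) (μ : YoungDiagram) (hl : μ.colLen 0 ≤ n)
    (m : ℕ → ℕ) (hmpos : ∀ i, i < n → 1 ≤ m i)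
    (hmincr : ∀ i j, i ≤ j → j < n → m i ≤ m j) :
    Matrix.det (Matrix.of (Pmat n μ m xv bv))
      = ∑ᶠ T ∈ {T : SemistandardYoungTableau μ | ∀ i j, (i, j) ∈ μ → T i j < m i},
          ∏ u ∈ μ.cells, (xv (T u.1 u.2 + 1) - bv (T u.1 u.2 + 1 + u.2 - u.1)) := by
  exact FJT.ML xv bv n (μ.cells.card + ∑ i ∈ Finset.range n, m i) μ m le_rfl hl hmincr
end
end

section
/- Let n ≥ 1, s ≥ 1 and k be integers with k + s ≥ 0, let x_1, …, x_n be indeterminates and (b_c)_{c ∈ ℤ} parameters. Consider directed lattice paths L from (−s+1, 1) to (k+1, n) using unit up steps and unit right steps, where a horizontal step from (r,t) to (r+1,t) has weight x_t − b_{r+t}, and w(L) is the product of the weights of all horizontal steps of L. Then Σ_L w(L) = Σ_{r=0}^{k+s} (−1)^r e_r( b_{−s+2}, b_{−s+3}, …, b_{k+n} ) · h_{k+s−r}( x_1, …, x_n ). -/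
open scoped Classical

noncomputable section

/-- A directed lattice path of length `len` in `ℤ × ℤ` from `A` to `B`, using unit right
steps `(r,t) → (r+1,t)` and unit up steps `(r,t) → (r,t+1)`, encoded as the sequence of its
vertices (constantly `B` after step `len`, so that the path is determined by finitely many
values). -/
def IsLatticePath (len : ℕ) (A B : ℤ × ℤ) (L : ℕ → ℤ × ℤ) : Prop :=
  L 0 = A ∧ (∀ k, len ≤ k → L k = B) ∧
    ∀ k, k < len → L (k + 1) = ((L k).1 + 1, (L k).2) ∨ L (k + 1) = ((L k).1, (L k).2 + 1)

/-- The weight of a lattice path: the product over its horizontal steps `(r,t) → (r+1,t)` of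
`x t - b (r + t)`. -/
def pathWeight {R : Type} [CommRing R] (len : ℕ) (x b : ℤ → R) (L : ℕ → ℤ × ℤ) : R :=
  ∏ k ∈ Finset.range len,
    if L (k + 1) = ((L k).1 + 1, (L k).2) then x (L k).2 - b ((L k).1 + (L k).2) else 1

/-- The polynomial ring `ℚ[x_c, b_c : c ∈ ℤ]`. -/
abbrev R7 : Type := MvPolynomial (ℤ ⊕ ℤ) ℚ

/-- The indeterminates `x c`, `c ∈ ℤ`. -/
def xz : ℤ → R7 := fun c => MvPolynomial.X (Sum.inl c)

/-- The indeterminates `b c`, `c ∈ ℤ`. -/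
def bz : ℤ → R7 := fun c => MvPolynomial.X (Sum.inr c)

/-- A version of `e_r` in variables `b_c` indexed by a finite set of integers. -/
def epolyZ (r : ℕ) (S : Finset ℤ) (b : ℤ → R7) : R7 :=
  ∑ T ∈ S.powersetCard r, ∏ c ∈ T, b c

/-- The complete homogeneous symmetric polynomial `h_k(x_1, …, x_m)`. -/
def hpolyZ (k m : ℕ) (x : ℤ → R7) : R7 :=
  ∑ α ∈ Finset.Nat.antidiagonalTuple m k, ∏ i : Fin m, x ((i : ℤ) + 1) ^ α i

/-! ### Recursive path-sum -/

def PS2 (x b : ℤ → R7) : ℕ → ℤ × ℤ → ℤ × ℤ → R7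
  | 0, A, B => if A = B then 1 else 0
  | (len+1), A, B =>
      (x A.2 - b (A.1 + A.2)) * PS2 x b len (A.1 + 1, A.2) B + PS2 x b len (A.1, A.2 + 1) B

lemma paths_finite (len : ℕ) (A B : ℤ × ℤ) :
    {L : ℕ → ℤ × ℤ | IsLatticePath len A B L}.Finite := by
  apply Set.Finite.of_finite_image (f := fun L (i : Fin len) =>
    decide (L ((i : ℕ) + 1) = ((L i).1 + 1, (L i).2)))
  · exact Set.toFinite _
  · intro L hL L' hL' h
    funext k
    induction k with
    | zero => rw [hL.1, hL'.1]
    | succ k ih =>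
      by_cases hk : k < len
      · have hb := congrFun h ⟨k, hk⟩
        simp only [decide_eq_decide] at hb
        rcases hL.2.2 k hk with h1 | h1 <;> rcases hL'.2.2 k hk with h2 | h2
        · rw [h1, h2, ih]
        · exfalso
          have := hb.1 h1
          rw [h2] at this
          have := congrArg Prod.fst this
          simp at this
        · exfalso
          have := hb.2 h2
          rw [h1] at this
          have := congrArg Prod.fst this
          simp at this
        · rw [h1, h2, ih]
      · have hk1 : len ≤ k + 1 := by omega
        rw [hL.2.1 _ hk1, hL'.2.1 _ hk1]

def prep (A : ℤ × ℤ) (L : ℕ → ℤ × ℤ) : ℕ → ℤ × ℤ := fun k => Nat.casesOn k A L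

lemma prep_path {len : ℕ} {A B C : ℤ × ℤ} {L : ℕ → ℤ × ℤ}
    (hC : C = (A.1 + 1, A.2) ∨ C = (A.1, A.2 + 1)) (hL : IsLatticePath len C B L) :
    IsLatticePath (len + 1) A B (prep A L) := by
  refine ⟨rfl, ?_, ?_⟩
  · intro k hk
    match k, hk with
    | (j+1), hk => exact hL.2.1 j (by omega)
  · intro k hk
    match k with
    | 0 =>
      show L 0 = _ ∨ L 0 = _
      rw [hL.1]
      exact hC
    | (j+1) => exact hL.2.2 j (by omega)

lemma path_split (len : ℕ) (A B : ℤ × ℤ) :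
    {L : ℕ → ℤ × ℤ | IsLatticePath (len + 1) A B L}
      = prep A '' {L | IsLatticePath len (A.1 + 1, A.2) B L}
        ∪ prep A '' {L | IsLatticePath len (A.1, A.2 + 1) B L} := by
  ext L
  constructor
  · intro hL
    have h1 := hL.2.2 0 (by omega)
    rw [hL.1] at h1
    have htail : ∀ C, L 1 = C → IsLatticePath len C B (fun k => L (k + 1)) := by
      intro C hC
      exact ⟨hC, fun k hk => hL.2.1 _ (by omega), fun k hk => hL.2.2 (k + 1) (by omega)⟩
    have hpre : prep A (fun k => L (k + 1)) = L := by
      funext k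
      match k with
      | 0 => exact hL.1.symm
      | (j+1) => rfl
    rcases h1 with h1 | h1
    · exact Or.inl ⟨_, htail _ h1, hpre⟩
    · exact Or.inr ⟨_, htail _ h1, hpre⟩
  · rintro (⟨L', hL', rfl⟩ | ⟨L', hL', rfl⟩)
    · exact prep_path (Or.inl rfl) hL'
    · exact prep_path (Or.inr rfl) hL'

lemma prep_injOn (A : ℤ × ℤ) (s : Set (ℕ → ℤ × ℤ)) : Set.InjOn (prep A) s := by
  intro L _ L' _ h
  funext k
  exact congrFun h (k + 1)

lemma pathWeight_prep (len : ℕ) (x b : ℤ → R7) (A : ℤ × ℤ) (L : ℕ → ℤ × ℤ) :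
    pathWeight (len + 1) x b (prep A L)
      = (if L 0 = (A.1 + 1, A.2) then x A.2 - b (A.1 + A.2) else 1) * pathWeight len x b L := by
  unfold pathWeight
  rw [Finset.prod_range_succ']
  rw [mul_comm]
  rfl

lemma finsum_paths (x b : ℤ → R7) :
    ∀ (len : ℕ) (A B : ℤ × ℤ),
      (∑ᶠ L ∈ {L : ℕ → ℤ × ℤ | IsLatticePath len A B L}, pathWeight len x b L)
        = PS2 x b len A B := by
  intro len
  induction len with
  | zero =>
    intro A B
    by_cases h : A = B
    · subst h
      have hset : {L : ℕ → ℤ × ℤ | IsLatticePath 0 A A L} = {fun _ => A} := by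
        ext L
        constructor
        · intro hL
          funext k
          exact hL.2.1 k (by omega)
        · rintro rfl
          exact ⟨rfl, fun _ _ => rfl, fun k hk => by omega⟩
      rw [hset, finsum_mem_singleton]
      simp [pathWeight, PS2]
    · have hset : {L : ℕ → ℤ × ℤ | IsLatticePath 0 A B L} = ∅ := by
        ext L
        simp only [Set.mem_setOf_eq, Set.mem_empty_iff_false, iff_false]
        intro hL
        exact h (hL.1.symm.trans (hL.2.1 0 (by omega)))
      rw [hset, finsum_mem_empty]
      simp [PS2, h]
  | succ len ih =>
    intro A B
    rw [path_split]
    have hdisj : Disjoint (prep A '' {L | IsLatticePath len (A.1 + 1, A.2) B L})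
        (prep A '' {L | IsLatticePath len (A.1, A.2 + 1) B L}) := by
      rw [Set.disjoint_left]
      rintro L ⟨L1, hL1, rfl⟩ ⟨L2, hL2, hL2'⟩
      have h0 : L2 0 = L1 0 := congrFun hL2' 1
      rw [hL1.1, hL2.1] at h0
      have := congrArg Prod.fst h0
      simp at this
    rw [finsum_mem_union hdisj ((paths_finite len _ B).image _) ((paths_finite len _ B).image _)]
    rw [finsum_mem_image (prep_injOn A _), finsum_mem_image (prep_injOn A _)]
    have e1 : (∑ᶠ L ∈ {L : ℕ → ℤ × ℤ | IsLatticePath len (A.1 + 1, A.2) B L},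
        pathWeight (len + 1) x b (prep A L))
        = (x A.2 - b (A.1 + A.2)) * ∑ᶠ L ∈ {L : ℕ → ℤ × ℤ | IsLatticePath len (A.1 + 1, A.2) B L},
            pathWeight len x b L := by
      rw [finsum_mem_eq_finite_toFinset_sum _ (paths_finite len _ B),
        finsum_mem_eq_finite_toFinset_sum _ (paths_finite len _ B), Finset.mul_sum]
      apply Finset.sum_congr rfl
      intro L hL
      rw [Set.Finite.mem_toFinset] at hL
      rw [pathWeight_prep, if_pos hL.1]
    have e2 : (∑ᶠ L ∈ {L : ℕ → ℤ × ℤ | IsLatticePath len (A.1, A.2 + 1) B L},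
        pathWeight (len + 1) x b (prep A L))
        = ∑ᶠ L ∈ {L : ℕ → ℤ × ℤ | IsLatticePath len (A.1, A.2 + 1) B L},
            pathWeight len x b L := by
      rw [finsum_mem_eq_finite_toFinset_sum _ (paths_finite len _ B),
        finsum_mem_eq_finite_toFinset_sum _ (paths_finite len _ B)]
      apply Finset.sum_congr rfl
      intro L hL
      rw [Set.Finite.mem_toFinset] at hL
      rw [pathWeight_prep, if_neg, one_mul]
      rw [hL.1]
      intro hc
      have := congrArg Prod.fst hc
      simp at this
    rw [e1, e2, ih, ih]
    rfl

/-! ### PS2 basic lemmas -/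

lemma PS2_eq_zero (x b : ℤ → R7) :
    ∀ (len : ℕ) (A B : ℤ × ℤ),
      ¬(A.1 ≤ B.1 ∧ A.2 ≤ B.2 ∧ B.1 - A.1 + (B.2 - A.2) = len) → PS2 x b len A B = 0 := by
  intro len
  induction len with
  | zero =>
    intro A B h
    rw [PS2, if_neg]
    rintro rfl
    exact h ⟨le_refl _, le_refl _, by omega⟩
  | succ len ih =>
    intro A B h
    rw [PS2, ih, ih, mul_zero, add_zero]
    · intro ⟨h1, h2, h3⟩
      exact h ⟨by omega, by omega, by omega⟩
    · intro ⟨h1, h2, h3⟩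
      exact h ⟨by omega, by omega, by omega⟩

lemma PS2_shift (x b : ℤ → R7) :
    ∀ (len : ℕ) (p q p' q' : ℤ),
      PS2 x b len (p, q + 1) (p', q' + 1)
        = PS2 (fun c => x (c + 1)) (fun c => b (c + 1)) len (p, q) (p', q') := by
  intro len
  induction len with
  | zero =>
    intro p q p' q'
    rw [PS2, PS2]
    by_cases h : (p, q) = (p', q')
    · rw [if_pos h, if_pos]
      rw [Prod.ext_iff] at h ⊢
      simp at h ⊢
      omega
    · rw [if_neg h, if_neg]
      rw [Prod.ext_iff] at h ⊢
      simp at h ⊢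
      omega
  | succ len ih =>
    intro p q p' q'
    rw [PS2, PS2]
    have h1 : (p + (q + 1)) = (p + q) + 1 := by ring
    rw [h1, ih p (q + 1) p' q', ih (p + 1) q p' q']

/-! ### epolyZ lemmas -/

lemma epolyZ_zero (S : Finset ℤ) (b : ℤ → R7) : epolyZ 0 S b = 1 := by
  simp [epolyZ]

lemma epolyZ_card_lt {r : ℕ} {S : Finset ℤ} (b : ℤ → R7) (h : S.card < r) :
    epolyZ r S b = 0 := by
  rw [epolyZ, Finset.powersetCard_eq_empty.2 h, Finset.sum_empty]

lemma epolyZ_insert (r : ℕ) {c : ℤ} {S : Finset ℤ} (hc : c ∉ S) (b : ℤ → R7) :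
    epolyZ (r + 1) (insert c S) b = epolyZ (r + 1) S b + b c * epolyZ r S b := by
  classical
  rw [epolyZ, Finset.powersetCard_succ_insert hc, Finset.sum_union, Finset.sum_image]
  · rw [epolyZ, epolyZ, Finset.mul_sum]
    congr 1
    apply Finset.sum_congr rfl
    intro T hT
    rw [Finset.mem_powersetCard] at hT
    rw [Finset.prod_insert (fun hcT => hc (hT.1 hcT))]
  · intro T1 h1 T2 h2 he
    rw [Finset.mem_coe, Finset.mem_powersetCard] at h1 h2
    have e1 : T1 = (insert c T1).erase c := by
      rw [Finset.erase_insert (fun hcT => hc (h1.1 hcT))]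
    have e2 : T2 = (insert c T2).erase c := by
      rw [Finset.erase_insert (fun hcT => hc (h2.1 hcT))]
    rw [e1, e2, he]
  · rw [Finset.disjoint_left]
    rintro T hT hT'
    rw [Finset.mem_powersetCard] at hT
    simp only [Finset.mem_image] at hT'
    obtain ⟨T', _, rfl⟩ := hT'
    exact hc (hT.1 (Finset.mem_insert_self c T'))

lemma epolyZ_shift (r : ℕ) (S : Finset ℤ) (b : ℤ → R7) :
    epolyZ r S (fun c => b (c + 1)) = epolyZ r (S.image (· + 1)) b := by
  classical
  rw [epolyZ, epolyZ]
  apply Finset.sum_nbij' (i := fun T => T.image (· + 1)) (j := fun T => T.image (· - 1))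
  · intro T hT
    rw [Finset.mem_powersetCard] at hT ⊢
    constructor
    · exact Finset.image_subset_image hT.1
    · rw [Finset.card_image_of_injective _ (add_left_injective 1), hT.2]
  · intro T hT
    rw [Finset.mem_powersetCard] at hT ⊢
    constructor
    · intro c hcT
      simp only [Finset.mem_image] at hcT
      obtain ⟨d, hd, rfl⟩ := hcT
      have := hT.1 hd
      simp only [Finset.mem_image] at this
      obtain ⟨e, he, rfl⟩ := this
      simpa using he
    · rw [Finset.card_image_of_injective _ (sub_left_injective), hT.2]
  · intro T hT
    ext c
    simp only [Finset.mem_image]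
    constructor
    · rintro ⟨d, ⟨e, he, rfl⟩, rfl⟩
      simpa using he
    · intro hc
      exact ⟨c + 1, ⟨c, hc, rfl⟩, by ring⟩
  · intro T hT
    ext c
    simp only [Finset.mem_image]
    constructor
    · rintro ⟨d, ⟨e, he, rfl⟩, rfl⟩
      simpa using he
    · intro hc
      exact ⟨c - 1, ⟨c, hc, rfl⟩, by ring⟩
  · intro T hT
    exact (Finset.prod_image (fun c _ d _ h => by omega)).symm

/-! ### hpolyZ lemmas -/

lemma hpolyZ_zero (n : ℕ) (x : ℤ → R7) : hpolyZ 0 n x = 1 := by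
  simp [hpolyZ, Finset.Nat.antidiagonalTuple_zero_right]

lemma hpolyZ_one_var (k : ℕ) (x : ℤ → R7) : hpolyZ k 1 x = x 1 ^ k := by
  simp [hpolyZ, Finset.Nat.antidiagonalTuple_one]

lemma hpolyZ_rec (K N : ℕ) (x : ℤ → R7) :
    hpolyZ (K + 1) (N + 1) x
      = x 1 * hpolyZ K (N + 1) x + hpolyZ (K + 1) N (fun c => x (c + 1)) := by
  classical
  rw [hpolyZ,
    ← Finset.sum_filter_add_sum_filter_not (Finset.Nat.antidiagonalTuple (N + 1) (K + 1))
      (fun α => α 0 = 0), add_comm]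
  congr 1
  · -- α 0 ≠ 0 part
    rw [hpolyZ, Finset.mul_sum]
    apply Finset.sum_nbij' (i := fun α => Function.update α 0 (α 0 - 1))
      (j := fun α => Function.update α 0 (α 0 + 1))
    · intro α hα
      rw [Finset.mem_filter, Finset.Nat.mem_antidiagonalTuple] at hα
      obtain ⟨h1, h2⟩ := hα
      rw [Finset.Nat.mem_antidiagonalTuple]
      rw [Finset.sum_update_of_mem (Finset.mem_univ 0), Finset.sdiff_singleton_eq_erase]
      rw [← Finset.add_sum_erase _ _ (Finset.mem_univ 0)] at h1
      omega
    · intro α hα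
      rw [Finset.Nat.mem_antidiagonalTuple] at hα
      rw [Finset.mem_filter, Finset.Nat.mem_antidiagonalTuple]
      rw [Finset.sum_update_of_mem (Finset.mem_univ 0), Finset.sdiff_singleton_eq_erase]
      rw [← Finset.add_sum_erase _ _ (Finset.mem_univ 0)] at hα
      constructor
      · omega
      · simp [Function.update_self]
    · intro α hα
      rw [Finset.mem_filter] at hα
      funext i
      by_cases hi : i = 0
      · subst hi
        simp only [Function.update_self]
        have h2 := hα.2
        omega
      · simp [Function.update_of_ne hi]
    · intro α hα
      funext i
      by_cases hi : i = 0
      · subst hi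
        simp [Function.update_self]
      · simp [Function.update_of_ne hi]
    · intro α hα
      rw [Finset.mem_filter] at hα
      obtain ⟨m, hm⟩ : ∃ m, α 0 = m + 1 := ⟨α 0 - 1, by have h2 := hα.2; omega⟩
      rw [Fin.prod_univ_succ, Fin.prod_univ_succ]
      have e1 : ∀ i : Fin N, Function.update α 0 (α 0 - 1) i.succ = α i.succ := by
        intro i
        exact Function.update_of_ne (Fin.succ_ne_zero i) _ _
      have e0 : Function.update α 0 (α 0 - 1) 0 = m := by
        rw [Function.update_self, hm, Nat.add_sub_cancel]
      simp only [e1, e0]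
      simp only [Fin.val_zero, Nat.cast_zero, zero_add, hm, pow_succ]
      ring
  · -- α 0 = 0 part
    rw [hpolyZ]
    apply Finset.sum_nbij' (i := fun α (i : Fin N) => α i.succ) (j := fun β => Fin.cons 0 β)
    · intro α hα
      rw [Finset.mem_filter, Finset.Nat.mem_antidiagonalTuple] at hα
      rw [Finset.Nat.mem_antidiagonalTuple]
      obtain ⟨h1, h2⟩ := hα
      rw [Fin.sum_univ_succ] at h1
      omega
    · intro β hβ
      rw [Finset.Nat.mem_antidiagonalTuple] at hβ
      rw [Finset.mem_filter, Finset.Nat.mem_antidiagonalTuple]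
      rw [Fin.sum_univ_succ]
      simp [hβ]
    · intro α hα
      rw [Finset.mem_filter] at hα
      funext i
      refine Fin.cases ?_ ?_ i
      · simp only [Fin.cons_zero]
        exact hα.2.symm
      · intro j
        simp [Fin.cons_succ]
    · intro β hβ
      funext i
      simp [Fin.cons_succ]
    · intro α hα
      rw [Finset.mem_filter] at hα
      rw [Fin.prod_univ_succ]
      have h2 : α 0 = 0 := hα.2
      simp only [h2, pow_zero, one_mul]
      apply Finset.prod_congr rfl
      intro i _
      simp only [Fin.val_succ, Nat.cast_add, Nat.cast_one]

/-! ### Algebra -/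

lemma alg1 (m : ℕ) (I : Finset ℤ) {c : ℤ} (hc : c ∉ I) (b : ℤ → R7) (H : ℕ → R7) :
    (∑ r ∈ Finset.range (m + 1 + 1), (-1 : R7) ^ r * epolyZ r (insert c I) b * H (m + 1 - r))
      = (∑ r ∈ Finset.range (m + 1 + 1), (-1 : R7) ^ r * epolyZ r I b * H (m + 1 - r))
        - b c * ∑ r ∈ Finset.range (m + 1), (-1 : R7) ^ r * epolyZ r I b * H (m - r) := by
  rw [Finset.sum_range_succ' (fun r => (-1 : R7) ^ r * epolyZ r (insert c I) b * H (m + 1 - r)),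
    Finset.sum_range_succ' (fun r => (-1 : R7) ^ r * epolyZ r I b * H (m + 1 - r))]
  simp only [pow_zero, one_mul, epolyZ_zero, Nat.sub_zero]
  have e : ∀ r ∈ Finset.range (m + 1),
      (-1 : R7) ^ (r + 1) * epolyZ (r + 1) (insert c I) b * H (m + 1 - (r + 1))
        = ((-1 : R7) ^ (r + 1) * epolyZ (r + 1) I b * H (m + 1 - (r + 1)))
          + (-(b c)) * ((-1 : R7) ^ r * epolyZ r I b * H (m - r)) := by
    intro r _
    rw [epolyZ_insert r hc b]
    have h : m + 1 - (r + 1) = m - r := by omega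
    rw [h]
    ring
  rw [Finset.sum_congr rfl e, Finset.sum_add_distrib, ← Finset.mul_sum]
  ring

lemma Icc_insert_left {a T : ℤ} (h : a + 1 ≤ T) :
    Finset.Icc (a + 1) T = insert (a + 1) (Finset.Icc (a + 2) T) := by
  ext c
  simp only [Finset.mem_Icc, Finset.mem_insert]
  omega

lemma not_mem_Icc_left (a T : ℤ) : (a + 1) ∉ Finset.Icc (a + 2) T := by
  simp only [Finset.mem_Icc]
  omega

/-! ### Main induction -/

lemma main_lemma :
    ∀ (v m : ℕ) (a : ℤ) (x b : ℤ → R7),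
      PS2 x b (m + v) (a, 1) (a + (m : ℤ), 1 + (v : ℤ))
        = ∑ r ∈ Finset.range (m + 1),
            (-1) ^ r * epolyZ r (Finset.Icc (a + 1) (a + (m : ℤ) + (v : ℤ))) b
              * hpolyZ (m - r) (v + 1) x := by
  intro v
  induction v with
  | zero =>
    intro m
    induction m with
    | zero =>
      intro a x b
      simp [PS2, epolyZ_zero, hpolyZ_zero]
    | succ m ihm =>
      intro a x b
      simp only [Nat.add_zero, Nat.cast_zero, add_zero] at ihm ⊢
      rw [PS2]
      dsimp only
      have hz : PS2 x b m (a, 1 + 1) (a + ((m + 1 : ℕ) : ℤ), 1) = 0 := by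
        apply PS2_eq_zero
        dsimp only
        omega
      rw [hz, add_zero]
      have h1 := ihm (a + 1) x b
      rw [show (a + 1 + ((m : ℕ) : ℤ)) = a + ((m + 1 : ℕ) : ℤ) from by push_cast; ring] at h1
      rw [h1, show a + 1 + 1 = a + 2 from by ring]
      have hins : Finset.Icc (a + 1) (a + ((m + 1 : ℕ) : ℤ))
          = insert (a + 1) (Finset.Icc (a + 2) (a + ((m + 1 : ℕ) : ℤ))) :=
        Icc_insert_left (by push_cast; omega)
      rw [hins, alg1 m _ (not_mem_Icc_left _ _) b (fun j => hpolyZ j (0 + 1) x)]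
      have hFull : (∑ r ∈ Finset.range (m + 1 + 1),
          (-1 : R7) ^ r * epolyZ r (Finset.Icc (a + 2) (a + ((m + 1 : ℕ) : ℤ))) b
            * hpolyZ (m + 1 - r) (0 + 1) x)
          = x 1 * ∑ r ∈ Finset.range (m + 1),
              (-1 : R7) ^ r * epolyZ r (Finset.Icc (a + 2) (a + ((m + 1 : ℕ) : ℤ))) b
                * hpolyZ (m - r) (0 + 1) x := by
        have hcard : (Finset.Icc (a + 2) (a + ((m + 1 : ℕ) : ℤ))).card < m + 1 := by
          rw [Int.card_Icc]
          push_cast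
          omega
        rw [Finset.sum_range_succ, epolyZ_card_lt b hcard, Finset.mul_sum]
        rw [mul_zero, zero_mul, add_zero]
        apply Finset.sum_congr rfl
        intro r hr
        rw [Finset.mem_range] at hr
        rw [hpolyZ_one_var, hpolyZ_one_var, show m + 1 - r = (m - r) + 1 from by omega,
          pow_succ]
        ring
      rw [hFull]
      ring
  | succ v ihv =>
    intro m
    induction m with
    | zero =>
      intro a x b
      simp only [Nat.zero_add, Nat.cast_zero, add_zero] at ihv ⊢
      rw [PS2]
      dsimp only
      have hz : PS2 x b v (a + 1, 1) (a, 1 + ((v + 1 : ℕ) : ℤ)) = 0 := by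
        apply PS2_eq_zero
        dsimp only
        omega
      rw [hz, mul_zero, zero_add]
      have hsh : PS2 x b v (a, 1 + 1) (a, 1 + ((v + 1 : ℕ) : ℤ))
          = PS2 (fun c => x (c + 1)) (fun c => b (c + 1)) v (a, 1) (a, 1 + (v : ℤ)) := by
        rw [show (1 + ((v + 1 : ℕ) : ℤ)) = (1 + (v : ℤ)) + 1 from by push_cast; ring]
        exact PS2_shift x b v a 1 _ _
      rw [hsh]
      have h2 := ihv 0 a (fun c => x (c + 1)) (fun c => b (c + 1))
      simp only [Nat.zero_add, Nat.cast_zero, add_zero] at h2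
      rw [h2]
      simp [Finset.sum_range_one, epolyZ_zero, hpolyZ_zero]
    | succ m ihm =>
      intro a x b
      rw [show m + 1 + (v + 1) = (m + (v + 1)) + 1 from by omega, PS2]
      dsimp only
      -- first summand via ihm
      have h1 := ihm (a + 1) x b
      rw [show (a + 1 + ((m : ℕ) : ℤ)) = a + ((m + 1 : ℕ) : ℤ) from by push_cast; ring] at h1
      rw [h1]
      -- second summand via shift and ihv
      have hsh : PS2 x b (m + (v + 1)) (a, 1 + 1) (a + ((m + 1 : ℕ) : ℤ), 1 + ((v + 1 : ℕ) : ℤ))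
          = PS2 (fun c => x (c + 1)) (fun c => b (c + 1)) (m + (v + 1)) (a, 1)
              (a + ((m + 1 : ℕ) : ℤ), 1 + (v : ℤ)) := by
        rw [show (1 + ((v + 1 : ℕ) : ℤ)) = (1 + (v : ℤ)) + 1 from by push_cast; ring]
        exact PS2_shift x b _ a 1 _ _
      rw [hsh]
      have h2 := ihv (m + 1) a (fun c => x (c + 1)) (fun c => b (c + 1))
      rw [show (m + 1) + v = m + (v + 1) from by omega] at h2
      rw [h2]
      -- normalize the shifted epolyZ
      have hesh : ∀ r : ℕ, epolyZ r (Finset.Icc (a + 1) (a + ((m + 1 : ℕ) : ℤ) + (v : ℤ)))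
          (fun c => b (c + 1))
          = epolyZ r (Finset.Icc (a + 2) (a + ((m + 1 : ℕ) : ℤ) + ((v + 1 : ℕ) : ℤ))) b := by
        intro r
        rw [epolyZ_shift, Finset.image_add_right_Icc]
        congr 1 <;> push_cast <;> ring
      rw [show a + 1 + 1 = a + 2 from by ring]
      set I := Finset.Icc (a + 2) (a + ((m + 1 : ℕ) : ℤ) + ((v + 1 : ℕ) : ℤ)) with hIdef
      have hins : Finset.Icc (a + 1) (a + ((m + 1 : ℕ) : ℤ) + ((v + 1 : ℕ) : ℤ))
          = insert (a + 1) I := by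
        rw [hIdef]
        apply Icc_insert_left
        push_cast
        omega
      rw [hins, alg1 m I (not_mem_Icc_left _ _) b (fun j => hpolyZ j (v + 1 + 1) x)]
      -- rewrite the shifted sum (Tail)
      have hTail : (∑ r ∈ Finset.range (m + 1 + 1),
          ((-1 : R7) ^ r * epolyZ r (Finset.Icc (a + 1) (a + ((m + 1 : ℕ) : ℤ) + (v : ℤ)))
            (fun c => b (c + 1))) * hpolyZ (m + 1 - r) (v + 1) (fun c => x (c + 1)))
          = (∑ r ∈ Finset.range (m + 1),
              (-1 : R7) ^ r * epolyZ r I b * hpolyZ (m + 1 - r) (v + 1 + 1) x)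
            - x 1 * ∑ r ∈ Finset.range (m + 1),
                (-1 : R7) ^ r * epolyZ r I b * hpolyZ (m - r) (v + 1 + 1) x
            + (-1 : R7) ^ (m + 1) * epolyZ (m + 1) I b := by
        rw [Finset.sum_range_succ]
        have hlast : ((-1 : R7) ^ (m + 1)
            * epolyZ (m + 1) (Finset.Icc (a + 1) (a + ((m + 1 : ℕ) : ℤ) + (v : ℤ)))
              (fun c => b (c + 1))) * hpolyZ (m + 1 - (m + 1)) (v + 1) (fun c => x (c + 1))
            = (-1 : R7) ^ (m + 1) * epolyZ (m + 1) I b := by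
          rw [hesh, show m + 1 - (m + 1) = 0 from by omega, hpolyZ_zero, mul_one]
        rw [hlast]
        congr 1
        have e : ∀ r ∈ Finset.range (m + 1),
            ((-1 : R7) ^ r * epolyZ r (Finset.Icc (a + 1) (a + ((m + 1 : ℕ) : ℤ) + (v : ℤ)))
              (fun c => b (c + 1))) * hpolyZ (m + 1 - r) (v + 1) (fun c => x (c + 1))
            = ((-1 : R7) ^ r * epolyZ r I b * hpolyZ (m + 1 - r) (v + 1 + 1) x)
              - x 1 * ((-1 : R7) ^ r * epolyZ r I b * hpolyZ (m - r) (v + 1 + 1) x) := by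
          intro r hr
          rw [Finset.mem_range] at hr
          rw [hesh]
          have hrec := hpolyZ_rec (m - r) (v + 1) x
          rw [show (m - r) + 1 = m + 1 - r from by omega] at hrec
          rw [show hpolyZ (m + 1 - r) (v + 1) (fun c => x (c + 1))
              = hpolyZ (m + 1 - r) (v + 1 + 1) x - x 1 * hpolyZ (m - r) (v + 1 + 1) x from by
            rw [hrec]; ring]
          ring
        rw [Finset.sum_congr rfl e, Finset.sum_sub_distrib, ← Finset.mul_sum]
      rw [hTail]
      -- final algebra on Full
      have hFull : (∑ r ∈ Finset.range (m + 1 + 1),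
          (-1 : R7) ^ r * epolyZ r I b * hpolyZ (m + 1 - r) (v + 1 + 1) x)
          = (∑ r ∈ Finset.range (m + 1),
              (-1 : R7) ^ r * epolyZ r I b * hpolyZ (m + 1 - r) (v + 1 + 1) x)
            + (-1 : R7) ^ (m + 1) * epolyZ (m + 1) I b := by
        rw [Finset.sum_range_succ, show m + 1 - (m + 1) = 0 from by omega, hpolyZ_zero,
          mul_one]
      rw [hFull]
      ring

/-- **Weighted lattice path enumeration.** For `n, s ≥ 1` and `k ∈ ℤ` with `k + s ≥ 0`,
the sum of weights of up-right lattice paths from `(-s+1, 1)` to `(k+1, n)` (where a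
horizontal step `(r,t) → (r+1,t)` has weight `x_t - b_{r+t}`) equals
`Σ_{r=0}^{k+s} (-1)^r e_r(b_{-s+2}, …, b_{k+n}) h_{k+s-r}(x_1, …, x_n)`. -/
theorem lattice_path_sum (n s : ℕ) (hn : 1 ≤ n) (hs : 1 ≤ s) (k : ℤ) (hk : 0 ≤ k + s) :
    (∑ᶠ L ∈ {L : ℕ → ℤ × ℤ |
        IsLatticePath (k + s + n - 1).toNat (1 - s, 1) (k + 1, n) L},
        pathWeight (k + s + n - 1).toNat xz bz L)
    = ∑ r ∈ Finset.range ((k + s).toNat + 1),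
        (-1) ^ r * epolyZ r (Finset.Icc (2 - (s : ℤ)) (k + n)) bz *
          hpolyZ ((k + s).toNat - r) n xz := by
  obtain ⟨v, rfl⟩ : ∃ v, n = v + 1 := ⟨n - 1, by omega⟩
  set m := (k + s).toNat with hm
  have hmz : (m : ℤ) = k + s := Int.toNat_of_nonneg hk
  have hlen : (k + s + ((v + 1 : ℕ) : ℤ) - 1).toNat = m + v := by omega
  rw [hlen, finsum_paths xz bz (m + v) (1 - s, 1) (k + 1, ((v + 1 : ℕ) : ℤ))]
  have hmain := main_lemma v m (1 - (s : ℤ)) xz bz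
  rw [show (1 - (s : ℤ) + (m : ℤ)) = k + 1 from by omega,
    show ((1 : ℤ) + (v : ℤ)) = ((v + 1 : ℕ) : ℤ) from by push_cast; ring] at hmain
  rw [hmain,
    show (1 - (s : ℤ) + 1) = 2 - (s : ℤ) from by ring,
    show ((k : ℤ) + 1 + (v : ℤ)) = k + ((v + 1 : ℕ) : ℤ) from by push_cast; ring]
end
end

section
/- Let λ be a Young diagram with ℓ(λ) ≤ n, let x_1,…,x_n, y_1,y_2,… be indeterminates, and let a^λ be the associated parameter sequence. Then: (a) for every partition μ with ℓ(μ) ≤ n and μ ⊄ λ, s_μ(x_1,…,x_n | a^λ) = 0; and (b) s_λ(x_1,…,x_n | a^λ) = Π_{(i,j) ∈ λ} ( x_i − y_j ). -/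
open scoped Classical

noncomputable section

/-- The parameter sequence `a^lam` associated to a Young diagram `lam` with `ℓ(lam) ≤ n`:
reading the southeast boundary of `lam`, the vertical step at height `i` (which is at
position `lam_i + n - i + 1`, i.e. `lam.rowLen i' + n - i'` for the 0-indexed row `i'`)
contributes `x_i`, and the horizontal step in column `j` contributes `y_j`
(the `r`-th boundary step is horizontal in column `j = r - #{vertical steps below it}`). -/
def aSeq {K : Type} [Field K] (n : ℕ) (lam : YoungDiagram) (x y : ℕ → K) : ℕ → K :=
  fun r =>
    if ∃ i ∈ Finset.range n, lam.rowLen i + n - i = r then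
      x ((Finset.range n).filter (fun i => r ≤ lam.rowLen i + n - i)).card
    else y (r - ((Finset.range n).filter (fun i => lam.rowLen i + n - i < r)).card)

/-- The field of rational functions over `ℚ` in the indeterminates `x i` and `y j`. -/
abbrev KXY : Type := FractionRing (MvPolynomial (ℕ ⊕ ℕ) ℚ)

/-- The indeterminates `x i`. -/
def xK : ℕ → KXY := fun i => algebraMap (MvPolynomial (ℕ ⊕ ℕ) ℚ) KXY (MvPolynomial.X (Sum.inl i))

/-- The indeterminates `y j`. -/
def yK : ℕ → KXY := fun j => algebraMap (MvPolynomial (ℕ ⊕ ℕ) ℚ) KXY (MvPolynomial.X (Sum.inr j))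

namespace FSAux

variable {K : Type} [Field K]

lemma f_lt {n : ℕ} (lam : YoungDiagram) {i₁ i₂ : ℕ} (h12 : i₁ < i₂) (h2 : i₂ ≤ n) :
    lam.rowLen i₂ + n - i₂ < lam.rowLen i₁ + n - i₁ := by
  have := lam.rowLen_anti i₁ i₂ h12.le
  omega

lemma f_le_f_iff {n : ℕ} (lam : YoungDiagram) {i₁ i₂ : ℕ} (h1 : i₁ ≤ n) (h2 : i₂ ≤ n) :
    lam.rowLen i₁ + n - i₁ ≤ lam.rowLen i₂ + n - i₂ ↔ i₂ ≤ i₁ := by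
  constructor
  · intro h
    by_contra hc
    push_neg at hc
    exact absurd h (not_le.2 (f_lt lam hc h2))
  · intro h
    rcases eq_or_lt_of_le h with rfl | hl
    · exact le_refl _
    · exact (f_lt lam hl h1).le

lemma aSeq_vertical {n : ℕ} (lam : YoungDiagram) (x y : ℕ → K) {i : ℕ} (hi : i < n) :
    aSeq n lam x y (lam.rowLen i + n - i) = x (i + 1) := by
  unfold aSeq
  rw [if_pos ⟨i, Finset.mem_range.2 hi, rfl⟩]
  congr 1
  have hset : (Finset.range n).filter
      (fun i' => lam.rowLen i + n - i ≤ lam.rowLen i' + n - i') = Finset.range (i + 1) := by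
    ext i'
    simp only [Finset.mem_filter, Finset.mem_range]
    constructor
    · rintro ⟨h1, h2⟩
      have := (f_le_f_iff lam hi.le h1.le).1 h2
      omega
    · intro h
      exact ⟨by omega, (f_le_f_iff lam hi.le (by omega)).2 (by omega)⟩
  rw [hset, Finset.card_range]

lemma card_V_le (n : ℕ) (lam : YoungDiagram) (m : ℕ) :
    ((Finset.range n).filter (fun i => lam.rowLen i + n - i ≤ m)).card ≤ m := by
  have h := Finset.card_le_card_of_injOn (f := fun i => lam.rowLen i + n - i)
    (s := (Finset.range n).filter (fun i => lam.rowLen i + n - i ≤ m))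
    (t := Finset.Icc 1 m) ?_ ?_
  · simpa using h
  · intro i hi
    simp only [Finset.mem_coe, Finset.mem_filter, Finset.mem_range] at hi
    simp only [Finset.mem_coe, Finset.mem_Icc]
    omega
  · intro i₁ h₁ i₂ h₂ heq
    simp only [Finset.coe_filter, Set.mem_setOf_eq, Finset.mem_range] at h₁ h₂
    by_contra hne
    rcases lt_or_gt_of_ne hne with hl | hl
    · exact absurd heq (f_lt lam hl h₂.1.le).ne'
    · exact absurd heq (f_lt lam hl h₁.1.le).ne

lemma key (n : ℕ) (lam : YoungDiagram) (x y : ℕ → K) (z : K) (m : ℕ) :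
    ∏ r ∈ Finset.Icc 1 m, (z - aSeq n lam x y r)
      = (∏ i ∈ (Finset.range n).filter (fun i => lam.rowLen i + n - i ≤ m), (z - x (i + 1)))
        * ∏ j ∈ Finset.Icc 1
            (m - ((Finset.range n).filter (fun i => lam.rowLen i + n - i ≤ m)).card),
            (z - y j) := by
  induction m with
  | zero =>
    have he : (Finset.range n).filter (fun i => lam.rowLen i + n - i ≤ 0) = ∅ := by
      rw [Finset.filter_eq_empty_iff]
      intro i hi
      rw [Finset.mem_range] at hi
      omega
    have he' : (Finset.range n).filter (fun i => lam.rowLen i + n - i = 0) = ∅ := by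
      rw [Finset.filter_eq_empty_iff]
      intro i hi
      rw [Finset.mem_range] at hi
      omega
    simp [he, he']
  | succ m ih =>
    rw [Finset.prod_Icc_succ_top (Nat.succ_le_succ (Nat.zero_le m)), ih]
    have hcard := card_V_le n lam m
    by_cases hv : ∃ i ∈ Finset.range n, lam.rowLen i + n - i = m + 1
    · obtain ⟨i₀, hi₀n, hfi₀⟩ := hv
      rw [Finset.mem_range] at hi₀n
      have ha : aSeq n lam x y (m + 1) = x (i₀ + 1) := by
        rw [← hfi₀]; exact aSeq_vertical lam x y hi₀n
      have hi₀notin : i₀ ∉ (Finset.range n).filter (fun i => lam.rowLen i + n - i ≤ m) := by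
        simp only [Finset.mem_filter, Finset.mem_range]
        omega
      have hV : (Finset.range n).filter (fun i => lam.rowLen i + n - i ≤ m + 1)
          = insert i₀ ((Finset.range n).filter (fun i => lam.rowLen i + n - i ≤ m)) := by
        ext i
        simp only [Finset.mem_filter, Finset.mem_range, Finset.mem_insert]
        constructor
        · rintro ⟨h1, h2⟩
          rcases eq_or_lt_of_le h2 with he | hl
          · left
            by_contra hne
            rcases lt_or_gt_of_ne hne with hlt | hlt
            · have := f_lt lam hlt hi₀n.le; omega
            · have := f_lt lam hlt (by omega : i ≤ n); omega
          · right; exact ⟨h1, by omega⟩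
        · rintro (rfl | ⟨h1, h2⟩)
          · exact ⟨hi₀n, by omega⟩
          · exact ⟨h1, by omega⟩
      rw [hV, Finset.prod_insert hi₀notin, Finset.card_insert_of_notMem hi₀notin, ha]
      rw [show m + 1 - (((Finset.range n).filter
        (fun i => lam.rowLen i + n - i ≤ m)).card + 1)
        = m - ((Finset.range n).filter (fun i => lam.rowLen i + n - i ≤ m)).card from by omega]
      ring
    · have hV : (Finset.range n).filter (fun i => lam.rowLen i + n - i ≤ m + 1)
          = (Finset.range n).filter (fun i => lam.rowLen i + n - i ≤ m) := by
        push_neg at hv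
        ext i
        simp only [Finset.mem_filter, Finset.mem_range]
        constructor
        · rintro ⟨h1, h2⟩
          have := hv i (Finset.mem_range.2 h1)
          exact ⟨h1, by omega⟩
        · rintro ⟨h1, h2⟩; exact ⟨h1, by omega⟩
      have hc : (Finset.range n).filter (fun i => lam.rowLen i + n - i < m + 1)
          = (Finset.range n).filter (fun i => lam.rowLen i + n - i ≤ m) := by
        ext i
        simp only [Finset.mem_filter, Finset.mem_range]
        omega
      have ha : aSeq n lam x y (m + 1)
          = y (m + 1 - ((Finset.range n).filter (fun i => lam.rowLen i + n - i ≤ m)).card) := by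
        unfold aSeq
        rw [if_neg hv, hc]
      rw [hV, ha]
      set c := ((Finset.range n).filter (fun i => lam.rowLen i + n - i ≤ m)).card with hcdef
      rw [show m + 1 - c = (m - c) + 1 from by omega,
        Finset.prod_Icc_succ_top (Nat.succ_le_succ (Nat.zero_le _))]
      rw [show m - c + 1 = m + 1 - c from by omega]
      ring

lemma diag (n : ℕ) (lam : YoungDiagram) (x y : ℕ → K) {i : ℕ} (hi : i < n) (z : K) :
    ∏ r ∈ Finset.Icc 1 (lam.rowLen i + (n - 1 - i)), (z - aSeq n lam x y r)
      = (∏ i' ∈ (Finset.range n).filter (fun i' => i < i'), (z - x (i' + 1)))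
        * ∏ j ∈ Finset.Icc 1 (lam.rowLen i), (z - y j) := by
  rw [key]
  have hV : (Finset.range n).filter
        (fun i' => lam.rowLen i' + n - i' ≤ lam.rowLen i + (n - 1 - i))
      = (Finset.range n).filter (fun i' => i < i') := by
    ext i'
    simp only [Finset.mem_filter, Finset.mem_range]
    constructor
    · rintro ⟨h1, h2⟩
      have hiff := f_le_f_iff lam hi.le h1.le
      refine ⟨h1, ?_⟩
      omega
    · rintro ⟨h1, h2⟩
      have hiff := f_le_f_iff lam hi.le h1.le
      refine ⟨h1, ?_⟩
      omega
  have hcard : ((Finset.range n).filter (fun i' => i < i')).card = n - 1 - i := by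
    have : (Finset.range n).filter (fun i' => i < i') = Finset.Ico (i + 1) n := by
      ext i'
      simp only [Finset.mem_filter, Finset.mem_range, Finset.mem_Ico]
      omega
    rw [this, Nat.card_Ico]
    omega
  rw [hV, hcard, Nat.add_sub_cancel]

lemma vdm_eq (n : ℕ) (x : ℕ → K) :
    vdm n x = ∏ i ∈ Finset.range n,
      ∏ i' ∈ (Finset.range n).filter (fun i' => i < i'), (x (i + 1) - x (i' + 1)) := by
  have h1 : ∀ i : ℕ, ∏ i' ∈ (Finset.range n).filter (fun i' => i < i'), (x (i + 1) - x (i' + 1))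
      = ∏ i' ∈ Finset.range n, if i < i' then x (i + 1) - x (i' + 1) else 1 := fun i =>
    Finset.prod_filter _ _
  simp_rw [h1]
  rw [← Finset.prod_product' (f := fun i i' => if i < i' then x (i + 1) - x (i' + 1) else 1)]
  rw [← Finset.prod_filter (p := fun p : ℕ × ℕ => p.1 < p.2)
    (f := fun p : ℕ × ℕ => x (p.1 + 1) - x (p.2 + 1))]
  unfold vdm
  refine Finset.prod_nbij' (fun p => (p.1 - 1, p.2 - 1)) (fun p => (p.1 + 1, p.2 + 1))
    ?_ ?_ ?_ ?_ ?_
  · rintro ⟨a, b⟩ h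
    simp only [Finset.mem_filter, Finset.mem_product, Finset.mem_Icc, Finset.mem_range] at h ⊢
    omega
  · rintro ⟨a, b⟩ h
    simp only [Finset.mem_filter, Finset.mem_product, Finset.mem_Icc, Finset.mem_range] at h ⊢
    omega
  · rintro ⟨a, b⟩ h
    simp only [Finset.mem_filter, Finset.mem_product, Finset.mem_Icc] at h
    simp only [Prod.mk.injEq]
    omega
  · rintro ⟨a, b⟩ h
    simp only [Finset.mem_filter, Finset.mem_product, Finset.mem_range] at h
    simp only [Prod.mk.injEq]
    omega
  · rintro ⟨a, b⟩ h
    simp only [Finset.mem_filter, Finset.mem_product, Finset.mem_Icc] at h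
    simp only
    rw [show a - 1 + 1 = a from by omega, show b - 1 + 1 = b from by omega]

lemma cells_prod (n : ℕ) (lam : YoungDiagram) (hlam : lam.colLen 0 ≤ n) (g : ℕ → ℕ → K) :
    ∏ u ∈ lam.cells, g u.1 u.2
      = ∏ i ∈ Finset.range n, ∏ j ∈ Finset.range (lam.rowLen i), g i j := by
  have hcells : lam.cells
      = (Finset.range n).biUnion (fun i => {i} ×ˢ Finset.range (lam.rowLen i)) := by
    ext ⟨i, j⟩
    simp only [YoungDiagram.mem_cells, Finset.mem_biUnion, Finset.mem_product,
      Finset.mem_singleton, Finset.mem_range, YoungDiagram.mem_iff_lt_rowLen]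
    constructor
    · intro h
      have h0 : (i, 0) ∈ lam := YoungDiagram.mem_iff_lt_rowLen.2 (by omega)
      have hin : i < lam.colLen 0 := YoungDiagram.mem_iff_lt_colLen.1 h0
      exact ⟨i, by omega, rfl, h⟩
    · rintro ⟨i', _, rfl, h⟩
      exact h
  rw [hcells, Finset.prod_biUnion]
  · refine Finset.prod_congr rfl fun i _ => ?_
    rw [Finset.singleton_product, Finset.prod_map]
    rfl
  · intro a _ b _ hab
    simp only [Finset.disjoint_left]
    rintro ⟨i, j⟩ hmem hmem'
    simp only [Finset.mem_product, Finset.mem_singleton] at hmem hmem'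
    exact hab (hmem.1 ▸ hmem'.1 ▸ rfl)


lemma xK_sub_ne {i j : ℕ} (h : i ≠ j) : xK i - xK j ≠ 0 := by
  intro h0
  apply h
  have h1 := sub_eq_zero.1 h0
  unfold xK at h1
  have hinj := IsFractionRing.injective (MvPolynomial (ℕ ⊕ ℕ) ℚ) KXY
  exact Sum.inl_injective (MvPolynomial.X_injective (hinj h1))

lemma vdm_ne (n : ℕ) : vdm n xK ≠ 0 := by
  unfold vdm
  rw [Finset.prod_ne_zero_iff]
  rintro ⟨a, b⟩ hp
  simp only [Finset.mem_filter, Finset.mem_product] at hp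
  exact xK_sub_ne hp.2.ne

end FSAux

/-- **Vanishing property of factorial Schur polynomials at `a = a^lam`.** For `lam` with
`ℓ(lam) ≤ n` and indeterminates `x`, `y`:
(a) `s_μ(x_1,…,x_n | a^lam) = 0` for every partition `μ` with `ℓ(μ) ≤ n` and `μ ⊄ lam`;
(b) `s_lam(x_1,…,x_n | a^lam) = Π_{(i,j) ∈ lam} (x_i - y_j)`
(cells 0-indexed, so `(x_i - y_j)` for the cell `u` reads `x (u.1+1) - y (u.2+1)`). -/
theorem facSchur_aSeq_vanishing (n : ℕ) (lam : YoungDiagram) (hlam : lam.colLen 0 ≤ n) :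
    (∀ μ : YoungDiagram, μ.colLen 0 ≤ n → ¬μ ≤ lam →
      facSchur n (fun k => μ.rowLen k) xK (aSeq n lam xK yK) = 0) ∧
    facSchur n (fun k => lam.rowLen k) xK (aSeq n lam xK yK)
      = ∏ u ∈ lam.cells, (xK (u.1 + 1) - yK (u.2 + 1)) := by
  constructor
  · intro μ hμn hμlam
    -- find a row k where μ is strictly longer than lam
    obtain ⟨⟨k, j⟩, hkμ, hkl⟩ := Finset.not_subset.1
      (fun h => hμlam (YoungDiagram.cells_subset_iff.1 h))
    rw [YoungDiagram.mem_cells] at hkμ hkl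
    have hkn : k < n := by
      have h0 : (k, 0) ∈ μ := μ.up_left_mem le_rfl (Nat.zero_le _) hkμ
      have := YoungDiagram.mem_iff_lt_colLen.1 h0
      omega
    have hrow : lam.rowLen k < μ.rowLen k := by
      have h1 := YoungDiagram.mem_iff_lt_rowLen.1 hkμ
      have h2 : ¬ j < lam.rowLen k := fun hc => hkl (YoungDiagram.mem_iff_lt_rowLen.2 hc)
      omega
    unfold facSchur
    beta_reduce
    rw [div_eq_iff (FSAux.vdm_ne n), zero_mul]
    rw [Matrix.det_apply]
    apply Finset.sum_eq_zero
    intro σ _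
    have hex : ∃ i : Fin n, (i : ℕ) ≤ k ∧ k ≤ (σ i : ℕ) := by
      by_contra hcon
      push_neg at hcon
      set S := Finset.univ.filter (fun i : Fin n => (i : ℕ) ≤ k)
      set T := Finset.univ.filter (fun i : Fin n => (i : ℕ) < k)
      have hmaps : ∀ i ∈ S, σ i ∈ T := by
        intro i hi
        simp only [S, T, Finset.mem_filter, Finset.mem_univ, true_and] at hi ⊢
        exact hcon i hi
      have hST : T ⊂ S := by
        constructor
        · intro i hi
          simp only [S, T, Finset.mem_filter, Finset.mem_univ, true_and] at hi ⊢
          omega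
        · intro hc
          have : (⟨k, hkn⟩ : Fin n) ∈ S := by
            simp [S]
          have := hc this
          simp [T] at this
      have h1 : S.card ≤ T.card :=
        Finset.card_le_card_of_injOn σ hmaps (σ.injective.injOn)
      have h2 : T.card < S.card := Finset.card_lt_card hST
      omega
    obtain ⟨i, hik, hσi⟩ := hex
    have hentry : (Matrix.of fun i j : Fin n =>
        ∏ r ∈ Finset.Icc 1 (μ.rowLen (j : ℕ) + (n - 1 - (j : ℕ))),
          (xK ((i : ℕ) + 1) - aSeq n lam xK yK r)) (σ i) i = 0 := by
      simp only [Matrix.of_apply]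
      apply Finset.prod_eq_zero (i := lam.rowLen ((σ i : ℕ)) + n - (σ i : ℕ))
      · rw [Finset.mem_Icc]
        have h1 : (σ i : ℕ) < n := (σ i).isLt
        have h2 : lam.rowLen (σ i : ℕ) ≤ lam.rowLen k := lam.rowLen_anti _ _ hσi
        have h3 : μ.rowLen k ≤ μ.rowLen (i : ℕ) := μ.rowLen_anti _ _ hik
        omega
      · rw [FSAux.aSeq_vertical lam xK yK (σ i).isLt, sub_self]
    have hzero : (∏ j : Fin n, (Matrix.of fun i j : Fin n =>
        ∏ r ∈ Finset.Icc 1 (μ.rowLen (j : ℕ) + (n - 1 - (j : ℕ))),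
          (xK ((i : ℕ) + 1) - aSeq n lam xK yK r)) (σ j) j) = 0 :=
      Finset.prod_eq_zero (Finset.mem_univ i) hentry
    rw [hzero]; simp
  · -- part (b)
    unfold facSchur
    beta_reduce
    rw [div_eq_iff (FSAux.vdm_ne n)]
    have htri : (Matrix.of fun i j : Fin n =>
        ∏ r ∈ Finset.Icc 1 (lam.rowLen (j : ℕ) + (n - 1 - (j : ℕ))),
          (xK ((i : ℕ) + 1) - aSeq n lam xK yK r)).BlockTriangular id := by
      intro i j hij
      simp only [id_eq] at hij
      simp only [Matrix.of_apply]
      apply Finset.prod_eq_zero (i := lam.rowLen ((i : ℕ)) + n - (i : ℕ))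
      · rw [Finset.mem_Icc]
        have h1 : (i : ℕ) < n := i.isLt
        have h2 : lam.rowLen (i : ℕ) ≤ lam.rowLen (j : ℕ) :=
          lam.rowLen_anti _ _ (le_of_lt hij)
        have h3 : (j : ℕ) < (i : ℕ) := hij
        omega
      · rw [FSAux.aSeq_vertical lam xK yK i.isLt, sub_self]
    rw [Matrix.det_of_upperTriangular htri]
    have hdiag : ∀ i : Fin n, (Matrix.of fun i j : Fin n =>
        ∏ r ∈ Finset.Icc 1 (lam.rowLen (j : ℕ) + (n - 1 - (j : ℕ))),
          (xK ((i : ℕ) + 1) - aSeq n lam xK yK r)) i i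
        = (∏ i' ∈ (Finset.range n).filter (fun i' => (i : ℕ) < i'),
            (xK ((i : ℕ) + 1) - xK (i' + 1)))
          * ∏ j ∈ Finset.Icc 1 (lam.rowLen (i : ℕ)), (xK ((i : ℕ) + 1) - yK j) := by
      intro i
      simp only [Matrix.of_apply]
      exact FSAux.diag n lam xK yK i.isLt _
    rw [Finset.prod_congr rfl (fun i _ => hdiag i), Finset.prod_mul_distrib]
    rw [Fin.prod_univ_eq_prod_range
      (fun i => ∏ i' ∈ (Finset.range n).filter (fun i' => i < i'), (xK (i + 1) - xK (i' + 1)))]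
    rw [Fin.prod_univ_eq_prod_range
      (fun i => ∏ j ∈ Finset.Icc 1 (lam.rowLen i), (xK (i + 1) - yK j))]
    rw [← FSAux.vdm_eq n xK]
    rw [FSAux.cells_prod n lam hlam (fun i j => xK (i + 1) - yK (j + 1))]
    have hrow : ∀ i : ℕ, ∏ j ∈ Finset.Icc 1 (lam.rowLen i), (xK (i + 1) - yK j)
        = ∏ j ∈ Finset.range (lam.rowLen i), (xK (i + 1) - yK (j + 1)) := by
      intro i
      rw [show Finset.Icc 1 (lam.rowLen i) = Finset.Ico 1 (lam.rowLen i + 1) from rfl]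
      rw [Finset.prod_Ico_eq_prod_range]
      simp only [Nat.add_sub_cancel]
      exact Finset.prod_congr rfl fun j _ => by rw [Nat.add_comm 1 j]
    rw [Finset.prod_congr rfl (fun i _ => hrow i)]
    ring
end
end
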